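/- arXiv:1108.5711 — 6 statements merged into one kernel-verified Lean document; each statement's English description precedes it below -/
import Mathlib

section
/- Let (λ, μ, ν) be an ℕ-representation such that λ·μ(w)·ν ∈ {0,1} for all words w, recognizing the characteristic series of L ⊆ A*. Then for every word u ∈ A* and letter a ∈ A: λ·μ(P(u·a))·ν = λ·ν + λ·μ(u)·σ_a·ν + λ·μ(P(u))·σ·ν, where σ = Σ_{b∈A} μ(b), σ_a = Σ_{b<a} μ(b), and μ(P(u)) = Σ_{v≺u} μ(v). -/
open Matrix

/-- The radix order on words over a totally ordered alphabet. -/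
def radixLt {A : Type*} [LinearOrder A] (u v : List A) : Prop :=
  u.length < v.length ∨ (u.length = v.length ∧ List.Lex (· < ·) u v)

private lemma not_lex_self {A : Type*} [LinearOrder A] :
    ∀ (u : List A), ¬ List.Lex (· < ·) u u
  | [] => by intro h; cases h
  | x :: u => by
    intro h
    cases h with
    | rel h => exact lt_irrefl _ h
    | cons h => exact not_lex_self u h

private lemma not_radixLt_self {A : Type*} [LinearOrder A] (u : List A) :
    ¬ radixLt u u := by
  rintro (h | ⟨_, h⟩)
  · exact lt_irrefl _ h
  · exact not_lex_self u h

private lemma lex_snoc {A : Type*} [LinearOrder A] (b c : A) :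
    ∀ (w u : List A), w.length = u.length →
      (List.Lex (· < ·) (w ++ [b]) (u ++ [c]) ↔
        List.Lex (· < ·) w u ∨ (w = u ∧ b < c))
  | [], [], _ => by
    simp only [List.nil_append]
    constructor
    · intro h
      cases h with
      | rel h => exact Or.inr ⟨by trivial, h⟩
      | cons h => cases h
    · rintro (h | ⟨-, h⟩)
      · cases h
      · exact List.Lex.rel h
  | [], y :: u, h => by simp at h
  | x :: w, [], h => by simp at h
  | x :: w, y :: u, h => by
    have hl : w.length = u.length := by simpa using h
    simp only [List.cons_append]
    constructor
    · intro hx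
      cases hx with
      | rel h => exact Or.inl (List.Lex.rel h)
      | cons h =>
        rcases (lex_snoc b c w u hl).1 h with h' | ⟨rfl, h'⟩
        · exact Or.inl (List.Lex.cons h')
        · exact Or.inr ⟨rfl, h'⟩
    · rintro (hlex | ⟨he, hbc⟩)
      · cases hlex with
        | rel h => exact List.Lex.rel h
        | cons h => exact List.Lex.cons ((lex_snoc b c w u hl).2 (Or.inl h))
      · cases he
        exact List.Lex.cons ((lex_snoc b c w w rfl).2 (Or.inr ⟨rfl, hbc⟩))

private lemma radixLt_snoc {A : Type*} [LinearOrder A] (u : List A) (a : A)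
    (w : List A) (b : A) :
    radixLt (w ++ [b]) (u ++ [a]) ↔ radixLt w u ∨ (w = u ∧ b < a) := by
  unfold radixLt
  simp only [List.length_append, List.length_singleton]
  constructor
  · rintro (h | ⟨h, hlex⟩)
    · exact Or.inl (Or.inl (by omega))
    · have hl : w.length = u.length := by omega
      rcases (lex_snoc b a w u hl).1 hlex with h' | h'
      · exact Or.inl (Or.inr ⟨hl, h'⟩)
      · exact Or.inr h'
  · rintro ((h | ⟨hl, hlex⟩) | ⟨rfl, h⟩)
    · exact Or.inl (by omega)
    · exact Or.inr ⟨by omega, (lex_snoc b a w u hl).2 (Or.inl hlex)⟩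
    · exact Or.inr ⟨rfl, (lex_snoc b a w w rfl).2 (Or.inr ⟨rfl, h⟩)⟩

/-- Key recurrence for the representation applied to initial segments of the
radix order: `λ·μ(P(u·a))·ν = λ·ν + λ·μ(u)·σ_a·ν + λ·μ(P(u))·σ·ν`. -/
theorem rep_initial_segment_recurrence {A : Type*} [Fintype A] [LinearOrder A]
    (k : ℕ) (μ : List A → Matrix (Fin k) (Fin k) ℕ)
    (hμ1 : μ [] = 1) (hμm : ∀ u v : List A, μ (u ++ v) = μ u * μ v)
    (lam ν : Fin k → ℕ) (L : Set (List A)) [DecidablePred (· ∈ L)]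
    (hchar : ∀ w : List A, lam ⬝ᵥ (μ w *ᵥ ν) = if w ∈ L then 1 else 0)
    (hfin : ∀ u : List A, {v | radixLt v u}.Finite)
    (u : List A) (a : A) :
    lam ⬝ᵥ ((∑ v ∈ (hfin (u ++ [a])).toFinset, μ v) *ᵥ ν) =
      lam ⬝ᵥ ν
      + lam ⬝ᵥ ((μ u * ∑ b ∈ Finset.univ.filter (· < a), μ [b]) *ᵥ ν)
      + lam ⬝ᵥ (((∑ v ∈ (hfin u).toFinset, μ v) * ∑ b : A, μ [b]) *ᵥ ν) := by
  classical
  set σ : Matrix (Fin k) (Fin k) ℕ := ∑ b : A, μ [b] with hσ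
  set σa : Matrix (Fin k) (Fin k) ℕ := ∑ b ∈ Finset.univ.filter (· < a), μ [b] with hσa
  set PS : Matrix (Fin k) (Fin k) ℕ := ∑ v ∈ (hfin u).toFinset, μ v with hPS
  set S : Finset (List A × A) :=
    ((hfin u).toFinset ×ˢ Finset.univ) ∪
      ({u} ×ˢ Finset.univ.filter (· < a)) with hS
  have hmemS : ∀ p : List A × A,
      p ∈ S ↔ radixLt p.1 u ∨ (p.1 = u ∧ p.2 < a) := by
    rintro ⟨w, b⟩
    simp only [hS, Finset.mem_union, Finset.mem_product, Set.Finite.mem_toFinset,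
      Set.mem_setOf_eq, Finset.mem_singleton, Finset.mem_filter, Finset.mem_univ,
      true_and, and_true]
  have h0 : ([] : List A) ∈ (hfin (u ++ [a])).toFinset := by
    simp only [Set.Finite.mem_toFinset, Set.mem_setOf_eq]
    left
    simp
  have hbij : ∑ p ∈ S, μ (p.1 ++ [p.2]) =
      ∑ v ∈ ((hfin (u ++ [a])).toFinset).erase [], μ v := by
    refine Finset.sum_bij (fun p _ => p.1 ++ [p.2]) ?_ ?_ ?_ ?_
    · intro p hp
      rw [Finset.mem_erase]
      refine ⟨by simp, ?_⟩
      simp only [Set.Finite.mem_toFinset, Set.mem_setOf_eq]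
      exact (radixLt_snoc u a p.1 p.2).2 ((hmemS p).1 hp)
    · intro p hp q hq hpq
      obtain ⟨h1, h2⟩ := List.append_inj' hpq (by simp)
      exact Prod.ext h1 (by simpa using h2)
    · intro v hv
      rw [Finset.mem_erase] at hv
      rcases v.eq_nil_or_concat with rfl | ⟨w, b, rfl⟩
      · exact absurd rfl hv.1
      · rw [List.concat_eq_append] at hv ⊢
        refine ⟨(w, b), ?_, rfl⟩
        rw [hmemS]
        have := hv.2
        simp only [Set.Finite.mem_toFinset, Set.mem_setOf_eq] at this
        exact (radixLt_snoc u a w b).1 this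
    · intro p hp; rfl
  have hdisj : Disjoint ((hfin u).toFinset ×ˢ (Finset.univ : Finset A))
      ({u} ×ˢ Finset.univ.filter (· < a)) := by
    rw [Finset.disjoint_left]
    rintro ⟨w, b⟩ h1 h2
    simp only [Finset.mem_product, Set.Finite.mem_toFinset, Set.mem_setOf_eq,
      Finset.mem_singleton] at h1 h2
    exact not_radixLt_self u (h2.1 ▸ h1.1)
  have hsum1 : ∑ p ∈ (hfin u).toFinset ×ˢ (Finset.univ : Finset A),
      μ (p.1 ++ [p.2]) = PS * σ := by
    rw [Finset.sum_product]
    simp_rw [hμm, ← Finset.mul_sum]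
    rw [hPS, hσ, Finset.sum_mul]
  have hsum2 : ∑ p ∈ ({u} : Finset (List A)) ×ˢ Finset.univ.filter (· < a),
      μ (p.1 ++ [p.2]) = μ u * σa := by
    rw [Finset.sum_product, Finset.sum_singleton]
    simp_rw [hμm, ← Finset.mul_sum]
    rfl
  have key : (∑ v ∈ (hfin (u ++ [a])).toFinset, μ v) =
      1 + μ u * σa + PS * σ := by
    rw [← Finset.add_sum_erase _ _ h0, hμ1, ← hbij, hS,
      Finset.sum_union hdisj, hsum1, hsum2]
    abel
  rw [key, add_mulVec, add_mulVec, one_mulVec, dotProduct_add, dotProduct_add]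
end

section
/- The enumerating series of a rational abstract numeration system is an ℕ-rational (equivalently, ℕ-recognizable) series: if L ⊆ A* is a rational infinite language, then there exists an ℕ-representation (η, κ, ξ) such that for every w ∈ L, η·κ(w)·ξ = val_L(w) + 1, and η·κ(w)·ξ = 0 for w ∉ L. -/
open Matrix

/-- The value of a word `w` in the abstract numeration system given by `L`. -/
noncomputable def ansVal {A : Type*} [LinearOrder A] (L : Set (List A)) (w : List A) : ℕ :=
  {v ∈ L | radixLt v w}.ncard

namespace ANSAux
set_option linter.unusedSectionVars false
open List

variable {A : Type*} [Fintype A] [LinearOrder A] {σ : Type} [Fintype σ] [DecidableEq σ]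
  (M : DFA A σ) [DecidablePred (· ∈ M.accept)]

def dm (p : σ) (a : A) (p' : σ) : ℕ := if M.step p a = p' then 1 else 0

def cntAll (q q' : σ) : ℕ :=
  (Finset.univ.filter fun b : A => M.step q b = q').card

def cntLt (a : A) (q q' : σ) : ℕ :=
  (Finset.univ.filter fun b : A => b < a ∧ M.step q b = q').card

def Cc (n : ℕ) (q : σ) : ℕ :=
  (Finset.univ.filter fun f : Fin n → A => M.eval (List.ofFn f) = q).card

def Nc (n : ℕ) (w : List A) (q : σ) : ℕ :=
  (Finset.univ.filter fun f : Fin n → A =>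
    List.Lex (· < ·) (List.ofFn f) w ∧ M.eval (List.ofFn f) = q).card

def Tc (n : ℕ) (q : σ) : ℕ := ∑ k ∈ Finset.range n, Cc M k q

/-- index type for the representation -/
abbrev I (σ : Type) : Type := σ ⊕ (Fin 3 × σ × σ)

def mat (a : A) : Matrix (I σ) (I σ) ℕ := fun i j =>
  match i, j with
  | .inl p, .inl p' => dm M p a p'
  | .inl p, .inr (k, p', q') => if k = 0 then dm M p a p' * cntLt M a p q' else 0
  | .inr (k, p, q), .inr (k', p', q') =>
      dm M p a p' *
        (if k = 0 ∧ k' = 0 then cntAll M q q'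
         else if k = 1 ∧ k' = 1 then (if q' = q then 1 else 0)
         else if k = 2 ∧ k' = 1 then (if q' = q then 1 else 0)
         else if k = 2 ∧ k' = 2 then cntAll M q q'
         else 0)
  | .inr _, .inl _ => 0

@[simp] lemma mat_inl_inl (a : A) (p p' : σ) : mat M a (.inl p) (.inl p') = dm M p a p' := rfl
@[simp] lemma mat_inl_inr (a : A) (p : σ) (k : Fin 3) (p' q' : σ) :
    mat M a (.inl p) (.inr (k, p', q')) = if k = 0 then dm M p a p' * cntLt M a p q' else 0 := rfl
@[simp] lemma mat_inr_inl (a : A) (x : Fin 3 × σ × σ) (p' : σ) :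
    mat M a (.inr x) (.inl p') = 0 := rfl
@[simp] lemma mat_inr_inr (a : A) (k k' : Fin 3) (p q p' q' : σ) :
    mat M a (.inr (k, p, q)) (.inr (k', p', q')) =
      dm M p a p' *
        (if k = 0 ∧ k' = 0 then cntAll M q q'
         else if k = 1 ∧ k' = 1 then (if q' = q then 1 else 0)
         else if k = 2 ∧ k' = 1 then (if q' = q then 1 else 0)
         else if k = 2 ∧ k' = 2 then cntAll M q q'
         else 0) := rfl

def kap (w : List A) : Matrix (I σ) (I σ) ℕ := (w.map (mat M)).prod

@[simp] lemma kap_nil : kap M ([] : List A) = 1 := rfl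

lemma kap_append (u v : List A) : kap M (u ++ v) = kap M u * kap M v := by
  simp [kap]

def eta : I σ → ℕ
  | .inl p => if p = M.start then 1 else 0
  | .inr (k, p, q) => if k = 2 ∧ p = M.start ∧ q = M.start then 1 else 0

def xi : I σ → ℕ
  | .inl p => if p ∈ M.accept then 1 else 0
  | .inr (k, p, q) => if (k = 0 ∨ k = 1) ∧ p ∈ M.accept ∧ q ∈ M.accept then 1 else 0

def Rvec (w : List A) : I σ → ℕ
  | .inl p => if M.eval w = p then 1 else 0
  | .inr (k, p, q) => (if M.eval w = p then 1 else 0) *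
      (if k = 0 then Nc M w.length w q else if k = 1 then Tc M w.length q
       else Cc M w.length q)

@[simp] lemma Rvec_inl (w : List A) (p : σ) :
    Rvec M w (.inl p) = if M.eval w = p then 1 else 0 := rfl
@[simp] lemma Rvec_inr (w : List A) (k : Fin 3) (p q : σ) :
    Rvec M w (.inr (k, p, q)) = (if M.eval w = p then 1 else 0) *
      (if k = 0 then Nc M w.length w q else if k = 1 then Tc M w.length q
       else Cc M w.length q) := rfl

lemma sum_indicator_mul (c : σ) (f : σ → ℕ) :
    ∑ p, (if c = p then 1 else 0) * f p = f c := by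
  simp [ite_mul, Finset.sum_ite_eq]

lemma sum_count2 {β : Type*} [Fintype β] (st : β → σ) (P : β → Prop) [DecidablePred P]
    (F : σ → ℕ) :
    ∑ x, (if P x then 1 else 0) * F (st x)
      = ∑ q, (Finset.univ.filter fun x => P x ∧ st x = q).card * F q := by
  have : ∀ q : σ, (Finset.univ.filter fun x => P x ∧ st x = q).card * F q
      = ∑ x, (if P x ∧ st x = q then 1 else 0) * F q := by
    intro q; rw [Finset.card_filter]; rw [Finset.sum_mul]
  rw [Finset.sum_congr rfl fun q _ => this q, Finset.sum_comm]
  refine Finset.sum_congr rfl fun x _ => ?_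
  by_cases h : P x <;> simp [h, ite_mul, Finset.sum_ite_eq']

lemma ofFn_snoc {n : ℕ} (g : Fin n → A) (b : A) :
    List.ofFn (Fin.snoc g b) = List.ofFn g ++ [b] := by
  rw [List.ofFn_succ']
  simp [Fin.snoc_castSucc, Fin.snoc_last, List.concat_eq_append]

/-- Sum over functions of length n+1 as sum over (prefix, last letter). -/
lemma sum_succ_fn {n : ℕ} (F : (Fin (n+1) → A) → ℕ) :
    ∑ f : Fin (n+1) → A, F f = ∑ g : Fin n → A, ∑ b : A, F (Fin.snoc g b) := by
  rw [← (Fin.snocEquiv (fun _ : Fin (n+1) => A)).sum_comp F]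
  rw [Fintype.sum_prod_type]
  exact Finset.sum_comm

lemma Cc_succ (n : ℕ) (q' : σ) :
    Cc M (n+1) q' = ∑ q, Cc M n q * cntAll M q q' := by
  unfold Cc
  rw [Finset.card_filter]
  calc (∑ f : Fin (n+1) → A, if M.eval (List.ofFn f) = q' then (1:ℕ) else 0)
      = ∑ g : Fin n → A, ∑ b : A,
          (if M.step (M.eval (List.ofFn g)) b = q' then (1:ℕ) else 0) := by
        rw [sum_succ_fn]
        exact Finset.sum_congr rfl fun g _ => Finset.sum_congr rfl fun b _ => by
          rw [ofFn_snoc, DFA.eval_append_singleton]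
    _ = ∑ g : Fin n → A, (1:ℕ) * cntAll M (M.eval (List.ofFn g)) q' := by
        refine Finset.sum_congr rfl fun g _ => ?_
        rw [one_mul, cntAll, Finset.card_filter]
    _ = ∑ q, Cc M n q * cntAll M q q' := by
        have := sum_count2 (st := fun g : Fin n → A => M.eval (List.ofFn g))
          (P := fun _ => True) (F := fun q => cntAll M q q')
        simp only [if_pos trivial, true_and] at this
        rw [this]; rfl


lemma not_lex_self (w : List A) : ¬ List.Lex (· < ·) w w := fun h =>
  List.lex_irrefl (fun x => lt_irrefl x) w h

lemma lex_cons_iff' {c d : A} {u w : List A} :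
    List.Lex (· < ·) (c :: u) (d :: w) ↔ c < d ∨ (c = d ∧ List.Lex (· < ·) u w) := by
  constructor
  · intro h
    cases h with
    | cons h => exact Or.inr ⟨rfl, h⟩
    | rel h => exact Or.inl h
  · rintro (h | ⟨rfl, h⟩)
    · exact List.Lex.rel h
    · exact List.Lex.cons h

lemma lex_append_singleton {u w : List A} (h : u.length = w.length) (b a : A) :
    List.Lex (· < ·) (u ++ [b]) (w ++ [a]) ↔
      List.Lex (· < ·) u w ∨ (u = w ∧ b < a) := by
  induction u generalizing w with
  | nil =>
    cases w with
    | nil => simpa using List.Lex.singleton_iff (r := ((· < ·) : A → A → Prop)) b a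
    | cons c w => simp at h
  | cons c u ih =>
    cases w with
    | nil => simp at h
    | cons d w =>
      simp only [List.length_cons, add_left_inj] at h
      simp only [List.cons_append, lex_cons_iff', ih h, List.cons.injEq]
      tauto

lemma sum_ofFn_eq {n : ℕ} (w : List A) (hw : w.length = n) (F : List A → ℕ) :
    ∑ g : Fin n → A, (if List.ofFn g = w then 1 else 0) * F (List.ofFn g) = F w := by
  subst hw
  rw [Finset.sum_eq_single (fun i => w.get i)]
  · simp [List.ofFn_get]
  · intro g _ hg
    have : List.ofFn g ≠ w := fun hc => hg (by
      have := List.ofFn_get w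
      exact List.ofFn_injective (by rw [hc, this]))
    simp [this]
  · simp

lemma Nc_succ (n : ℕ) (w : List A) (hw : w.length = n) (a : A) (q' : σ) :
    Nc M (n+1) (w ++ [a]) q'
      = (∑ q, Nc M n w q * cntAll M q q') + cntLt M a (M.eval w) q' := by
  unfold Nc
  rw [Finset.card_filter, sum_succ_fn]
  have key : ∀ (g : Fin n → A) (b : A),
      (if List.Lex (· < ·) (List.ofFn (Fin.snoc g b)) (w ++ [a]) ∧
          M.eval (List.ofFn (Fin.snoc g b)) = q' then (1:ℕ) else 0)
        = (if List.Lex (· < ·) (List.ofFn g) w ∧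
              M.step (M.eval (List.ofFn g)) b = q' then (1:ℕ) else 0)
          + (if List.ofFn g = w then 1 else 0) *
              (if b < a ∧ M.step (M.eval (List.ofFn g)) b = q' then (1:ℕ) else 0) := by
    intro g b
    rw [ofFn_snoc, DFA.eval_append_singleton]
    have hlen : (List.ofFn g).length = w.length := by simp [hw]
    simp only [lex_append_singleton hlen]
    by_cases h1 : List.Lex (· < ·) (List.ofFn g) w
    · have h2 : List.ofFn g ≠ w := fun hc => not_lex_self w (hc ▸ h1)
      by_cases h3 : M.step (M.eval (List.ofFn g)) b = q' <;> simp [h1, h2, h3]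
    · by_cases h2 : List.ofFn g = w
      · subst h2
        simp [not_lex_self (List.ofFn g)]
      · simp [h1, h2]
  calc (∑ g : Fin n → A, ∑ b : A,
        if List.Lex (· < ·) (List.ofFn (Fin.snoc g b)) (w ++ [a]) ∧
            M.eval (List.ofFn (Fin.snoc g b)) = q' then (1:ℕ) else 0)
      = (∑ g : Fin n → A, ∑ b : A,
          if List.Lex (· < ·) (List.ofFn g) w ∧
              M.step (M.eval (List.ofFn g)) b = q' then (1:ℕ) else 0)
        + ∑ g : Fin n → A, (if List.ofFn g = w then 1 else 0) *
            ∑ b : A, (if b < a ∧ M.step (M.eval (List.ofFn g)) b = q' then (1:ℕ) else 0) := by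
        rw [← Finset.sum_add_distrib]
        refine Finset.sum_congr rfl fun g _ => ?_
        rw [Finset.mul_sum, ← Finset.sum_add_distrib]
        exact Finset.sum_congr rfl fun b _ => key g b
    _ = (∑ q, Nc M n w q * cntAll M q q') + cntLt M a (M.eval w) q' := by
        congr 1
        · calc (∑ g : Fin n → A, ∑ b : A,
              if List.Lex (· < ·) (List.ofFn g) w ∧
                  M.step (M.eval (List.ofFn g)) b = q' then (1:ℕ) else 0)
              = ∑ g : Fin n → A, (if List.Lex (· < ·) (List.ofFn g) w then (1:ℕ) else 0) *
                  cntAll M (M.eval (List.ofFn g)) q' := by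
                refine Finset.sum_congr rfl fun g _ => ?_
                rw [cntAll, Finset.card_filter, Finset.mul_sum]
                refine Finset.sum_congr rfl fun b _ => ?_
                by_cases h1 : List.Lex (· < ·) (List.ofFn g) w <;>
                  by_cases h2 : M.step (M.eval (List.ofFn g)) b = q' <;> simp [h1, h2]
            _ = ∑ q, Nc M n w q * cntAll M q q' := by
                rw [sum_count2 (st := fun g : Fin n → A => M.eval (List.ofFn g))
                  (P := fun g => List.Lex (· < ·) (List.ofFn g) w)
                  (F := fun q => cntAll M q q')]
                rfl
        · have : ∀ g : Fin n → A,
              (∑ b : A, if b < a ∧ M.step (M.eval (List.ofFn g)) b = q' then (1:ℕ) else 0)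
                = cntLt M a (M.eval (List.ofFn g)) q' := by
            intro g; rw [cntLt, Finset.card_filter]
          rw [Finset.sum_congr rfl fun g _ => by rw [this g]]
          exact sum_ofFn_eq w hw (fun v => cntLt M a (M.eval v) q')

lemma Tc_succ (n : ℕ) (q : σ) : Tc M (n+1) q = Tc M n q + Cc M n q := by
  rw [Tc, Finset.sum_range_succ]; rfl


lemma sum_pq (c : σ) (a : A) (p' : σ) (X Y : σ → ℕ) :
    ∑ p, ∑ q, ((if c = p then 1 else 0) * X q) * (dm M p a p' * Y q)
      = dm M c a p' * ∑ q, X q * Y q := by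
  have h : ∀ p q, ((if c = p then 1 else 0) * X q) * (dm M p a p' * Y q)
      = ((if c = p then 1 else 0) * dm M p a p') * (X q * Y q) := by intros; ring
  simp_rw [h]
  rw [← Finset.sum_mul_sum]
  rw [show (∑ p, (if c = p then 1 else 0) * dm M p a p') = dm M c a p' from
    sum_indicator_mul c _]

lemma sum_mul_ind (c : σ) (X : σ → ℕ) :
    ∑ q, X q * (if c = q then 1 else 0) = X c := by
  simp [mul_ite, Finset.sum_ite_eq]

lemma row_step (w : List A) (a : A) :
    Rvec M w ᵥ* mat M a = Rvec M (w ++ [a]) := by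
  have hv : ∀ (v : I σ → ℕ) (P : Matrix (I σ) (I σ) ℕ) (j : I σ),
      (v ᵥ* P) j = ∑ i, v i * P i j := fun v P j => rfl
  funext j
  rcases j with p' | ⟨k', p', q'⟩
  · rw [hv, Fintype.sum_sum_type]
    simp only [mat_inl_inl, mat_inr_inl, Rvec_inl, Rvec_inr, mul_zero,
      Finset.sum_const_zero, add_zero]
    rw [sum_indicator_mul]
    rw [show M.eval (w ++ [a]) = M.step (M.eval w) a from DFA.eval_append_singleton _ _ _]
    rfl
  · rw [hv, Fintype.sum_sum_type]
    simp only [mat_inl_inr, mat_inr_inr, Rvec_inl, Rvec_inr, Fintype.sum_prod_type,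
      Fin.sum_univ_three]
    rcases (by decide : ∀ k : Fin 3, k = 0 ∨ k = 1 ∨ k = 2) k' with rfl | rfl | rfl
    · simp only [eq_self_iff_true, if_true, true_and, and_true,
        eq_false (by decide : ¬((1:Fin 3) = 0)), eq_false (by decide : ¬((2:Fin 3) = 0)),
        eq_false (by decide : ¬((0:Fin 3) = 1)), eq_false (by decide : ¬((2:Fin 3) = 1)),
        eq_false (by decide : ¬((0:Fin 3) = 2)), eq_false (by decide : ¬((1:Fin 3) = 2)),
        if_false, false_and, and_false, mul_zero, zero_mul, Finset.sum_const_zero,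
        add_zero, zero_add]
      rw [sum_indicator_mul (M.eval w) (fun p => dm M p a p' * cntLt M a p q'), sum_pq,
        show (w ++ [a]).length = w.length + 1 by simp,
        Nc_succ M w.length w rfl a q', DFA.eval_append_singleton]
      simp only [dm, mul_add]
      ring
    · simp only [eq_self_iff_true, if_true, true_and, and_true,
        eq_false (by decide : ¬((1:Fin 3) = 0)), eq_false (by decide : ¬((2:Fin 3) = 0)),
        eq_false (by decide : ¬((0:Fin 3) = 1)), eq_false (by decide : ¬((2:Fin 3) = 1)),
        eq_false (by decide : ¬((0:Fin 3) = 2)), eq_false (by decide : ¬((1:Fin 3) = 2)),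
        if_false, false_and, and_false, mul_zero, zero_mul, Finset.sum_const_zero,
        add_zero, zero_add]
      rw [sum_pq, sum_pq, sum_mul_ind, sum_mul_ind,
        show (w ++ [a]).length = w.length + 1 by simp,
        Tc_succ, DFA.eval_append_singleton]
      simp only [dm, mul_add]
    · simp only [eq_self_iff_true, if_true, true_and, and_true,
        eq_false (by decide : ¬((1:Fin 3) = 0)), eq_false (by decide : ¬((2:Fin 3) = 0)),
        eq_false (by decide : ¬((0:Fin 3) = 1)), eq_false (by decide : ¬((2:Fin 3) = 1)),
        eq_false (by decide : ¬((0:Fin 3) = 2)), eq_false (by decide : ¬((1:Fin 3) = 2)),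
        if_false, false_and, and_false, mul_zero, zero_mul, Finset.sum_const_zero,
        add_zero, zero_add]
      rw [sum_pq, show (w ++ [a]).length = w.length + 1 by simp, ← Cc_succ,
        DFA.eval_append_singleton]
      simp only [dm]


@[simp] lemma eta_inl (p : σ) : eta M (.inl p) = if p = M.start then 1 else 0 := rfl
@[simp] lemma eta_inr (k : Fin 3) (p q : σ) :
    eta M (.inr (k, p, q)) = if k = 2 ∧ p = M.start ∧ q = M.start then 1 else 0 := rfl
@[simp] lemma xi_inl (p : σ) : xi M (.inl p) = if p ∈ M.accept then 1 else 0 := rfl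
@[simp] lemma xi_inr (k : Fin 3) (p q : σ) :
    xi M (.inr (k, p, q)) =
      if (k = 0 ∨ k = 1) ∧ p ∈ M.accept ∧ q ∈ M.accept then 1 else 0 := rfl

lemma Cc_zero (q : σ) : Cc M 0 q = if M.start = q then 1 else 0 := by
  unfold Cc
  rw [Finset.card_filter, Fintype.sum_unique]
  simp

lemma Nc_zero (q : σ) : Nc M 0 [] q = 0 := by
  unfold Nc
  rw [Finset.card_filter, Fintype.sum_unique]
  simp [List.not_lex_nil]

lemma Tc_zero (q : σ) : Tc M 0 q = 0 := rfl

lemma kap_singleton (a : A) : kap M [a] = mat M a := by simp [kap]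

lemma row_nil : eta M = Rvec M ([] : List A) := by
  funext i
  rcases i with p | ⟨k, p, q⟩
  · simp [DFA.eval_nil, eq_comm]
  · rcases (by decide : ∀ k : Fin 3, k = 0 ∨ k = 1 ∨ k = 2) k with rfl | rfl | rfl
    · simp [Nc_zero]
    · simp [Tc_zero]
    · simp only [eta_inr, Rvec_inr, DFA.eval_nil, List.length_nil, Cc_zero]
      by_cases h1 : p = M.start <;> by_cases h2 : q = M.start <;>
        simp [h1, h2, eq_comm]

lemma row_eq (w : List A) : eta M ᵥ* kap M w = Rvec M w := by
  induction w using List.reverseRecOn with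
  | nil => rw [kap_nil, Matrix.vecMul_one]; exact row_nil M
  | append_singleton w a ih =>
      rw [kap_append, kap_singleton, ← Matrix.vecMul_vecMul, ih, row_step]

noncomputable def Ffin : Finset σ := Finset.univ.filter (· ∈ M.accept)

lemma sum_pq2 (c : σ) (X : σ → ℕ) :
    ∑ p, ∑ q, ((if c = p then 1 else 0) * X q) *
        (if p ∈ M.accept ∧ q ∈ M.accept then 1 else 0)
      = (if c ∈ M.accept then 1 else 0) * ∑ q, X q * (if q ∈ M.accept then 1 else 0) := by
  have h : ∀ p q : σ, ((if c = p then 1 else 0) * X q) *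
        (if p ∈ M.accept ∧ q ∈ M.accept then 1 else 0)
      = ((if c = p then 1 else 0) * (if p ∈ M.accept then 1 else 0)) *
          (X q * (if q ∈ M.accept then 1 else 0)) := by
    intro p q
    by_cases h1 : p ∈ M.accept <;> by_cases h2 : q ∈ M.accept <;>
      simp [h1, h2] <;> ring
  simp_rw [h]
  rw [← Finset.sum_mul_sum]
  rw [show (∑ p, (if c = p then 1 else 0) * (if p ∈ M.accept then 1 else 0))
      = (if c ∈ M.accept then 1 else 0) from sum_indicator_mul c _]

lemma sum_Ffin (X : σ → ℕ) :
    ∑ q, X q * (if q ∈ M.accept then 1 else 0) = ∑ q ∈ Ffin M, X q := by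
  rw [Ffin, Finset.sum_filter]
  refine Finset.sum_congr rfl fun q _ => ?_
  by_cases h : q ∈ M.accept <;> simp [h]

lemma final_val (w : List A) :
    eta M ⬝ᵥ (kap M w *ᵥ xi M)
      = (if M.eval w ∈ M.accept then 1 else 0)
          * (1 + ∑ q ∈ Ffin M, (Tc M w.length q + Nc M w.length w q)) := by
  rw [Matrix.dotProduct_mulVec, row_eq]
  have hd : Rvec M w ⬝ᵥ xi M = ∑ i, Rvec M w i * xi M i := rfl
  rw [hd, Fintype.sum_sum_type]
  simp only [Rvec_inl, Rvec_inr, xi_inl, xi_inr, Fintype.sum_prod_type, Fin.sum_univ_three]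
  simp only [eq_self_iff_true, if_true, true_and, and_true, true_or, or_true,
    eq_false (by decide : ¬((1:Fin 3) = 0)), eq_false (by decide : ¬((2:Fin 3) = 0)),
    eq_false (by decide : ¬((0:Fin 3) = 1)), eq_false (by decide : ¬((2:Fin 3) = 1)),
    eq_false (by decide : ¬((0:Fin 3) = 2)), eq_false (by decide : ¬((1:Fin 3) = 2)),
    if_false, false_and, and_false, false_or, or_false, mul_zero, zero_mul,
    Finset.sum_const_zero, add_zero, zero_add]
  rw [sum_indicator_mul (M.eval w) (fun p => if p ∈ M.accept then 1 else 0),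
    sum_pq2, sum_pq2, sum_Ffin, sum_Ffin, Finset.sum_add_distrib]
  ring


lemma ncard_len (n : ℕ) (P : List A → Prop) [DecidablePred P] :
    {v : List A | v.length = n ∧ P v}.ncard
      = (Finset.univ.filter fun f : Fin n → A => P (List.ofFn f)).card := by
  have h1 : {v : List A | v.length = n ∧ P v}
      = List.ofFn '' {f : Fin n → A | P (List.ofFn f)} := by
    ext v
    constructor
    · rintro ⟨hl, hp⟩
      subst hl
      exact ⟨fun i => v.get i, by simpa [List.ofFn_get] using hp, List.ofFn_get v⟩
    · rintro ⟨f, hf, rfl⟩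
      exact ⟨by simp, hf⟩
  rw [h1, Set.ncard_image_of_injective _ List.ofFn_injective,
    show {f : Fin n → A | P (List.ofFn f)}
        = ↑(Finset.univ.filter fun f : Fin n → A => P (List.ofFn f)) by ext f; simp,
    Set.ncard_coe_finset]

lemma card_filter_mem {n : ℕ} (P : (Fin n → A) → Prop) [DecidablePred P] :
    (Finset.univ.filter fun f : Fin n → A => P f ∧ M.eval (List.ofFn f) ∈ M.accept).card
      = ∑ q ∈ Ffin M,
          (Finset.univ.filter fun f : Fin n → A => P f ∧ M.eval (List.ofFn f) = q).card := by
  rw [Finset.card_filter]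
  have h : ∀ f : Fin n → A,
      (if P f ∧ M.eval (List.ofFn f) ∈ M.accept then (1:ℕ) else 0)
        = ∑ q ∈ Ffin M, (if P f ∧ M.eval (List.ofFn f) = q then 1 else 0) := by
    intro f
    by_cases hp : P f
    · simp only [hp, true_and]
      rw [Finset.sum_ite_eq (Ffin M) (M.eval (List.ofFn f)) (fun _ => (1:ℕ))]
      simp [Ffin]
    · simp [hp]
  rw [Finset.sum_congr rfl fun f _ => h f, Finset.sum_comm]
  exact Finset.sum_congr rfl fun q _ => (Finset.card_filter _ _).symm

lemma ncard_eq_Nc (w : List A) :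
    {v : List A | v.length = w.length ∧
        (List.Lex (· < ·) v w ∧ M.eval v ∈ M.accept)}.ncard
      = ∑ q ∈ Ffin M, Nc M w.length w q := by
  rw [ncard_len, card_filter_mem M (fun f : Fin w.length → A => List.Lex (· < ·) (List.ofFn f) w)]
  rfl

lemma ncard_lt_len (n : ℕ) :
    {v : List A | v.length < n ∧ M.eval v ∈ M.accept}.ncard = ∑ q ∈ Ffin M, Tc M n q := by
  induction n with
  | zero => simp [Tc_zero]
  | succ n ih =>
    have hset : {v : List A | v.length < n + 1 ∧ M.eval v ∈ M.accept}
        = {v : List A | v.length < n ∧ M.eval v ∈ M.accept}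
          ∪ {v : List A | v.length = n ∧ M.eval v ∈ M.accept} := by
      ext v
      simp only [Set.mem_setOf_eq, Set.mem_union]
      constructor
      · rintro ⟨hl, hm⟩
        rcases Nat.lt_succ_iff_lt_or_eq.mp hl with h | h
        · exact Or.inl ⟨h, hm⟩
        · exact Or.inr ⟨h, hm⟩
      · rintro (⟨hl, hm⟩ | ⟨hl, hm⟩)
        · exact ⟨Nat.lt_succ_of_lt hl, hm⟩
        · exact ⟨hl ▸ Nat.lt_succ_self n, hm⟩
    have hfin1 : {v : List A | v.length < n ∧ M.eval v ∈ M.accept}.Finite :=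
      ((List.finite_length_lt A n).subset fun v hv => hv.1)
    have hfin2 : {v : List A | v.length = n ∧ M.eval v ∈ M.accept}.Finite :=
      ((List.finite_length_eq A n).subset fun v hv => hv.1)
    have hdisj : Disjoint {v : List A | v.length < n ∧ M.eval v ∈ M.accept}
        {v : List A | v.length = n ∧ M.eval v ∈ M.accept} := by
      rw [Set.disjoint_left]
      rintro v ⟨hl, _⟩ ⟨he, _⟩
      omega
    rw [hset, Set.ncard_union_eq hdisj hfin1 hfin2, ih,
      ncard_len n (fun v => M.eval v ∈ M.accept)]
    have : (Finset.univ.filter fun f : Fin n → A => M.eval (List.ofFn f) ∈ M.accept).card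
        = ∑ q ∈ Ffin M, Cc M n q := by
      have := card_filter_mem M (fun _ : Fin n → A => True)
      simp only [true_and] at this
      rw [this]
      rfl
    rw [this, ← Finset.sum_add_distrib]
    exact Finset.sum_congr rfl fun q _ => (Tc_succ M n q).symm

lemma ansVal_eq (w : List A) :
    ansVal M.accepts w = ∑ q ∈ Ffin M, (Tc M w.length q + Nc M w.length w q) := by
  have hset : {v | v ∈ M.accepts ∧ radixLt v w}
      = {v : List A | v.length < w.length ∧ M.eval v ∈ M.accept}
        ∪ {v : List A | v.length = w.length ∧
            (List.Lex (· < ·) v w ∧ M.eval v ∈ M.accept)} := by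
    ext v
    simp only [Set.mem_setOf_eq, Set.mem_union, radixLt, DFA.mem_accepts]
    tauto
  have hfin1 : {v : List A | v.length < w.length ∧ M.eval v ∈ M.accept}.Finite :=
    ((List.finite_length_lt A w.length).subset fun v hv => hv.1)
  have hfin2 : {v : List A | v.length = w.length ∧
      (List.Lex (· < ·) v w ∧ M.eval v ∈ M.accept)}.Finite :=
    ((List.finite_length_eq A w.length).subset fun v hv => hv.1)
  have hdisj : Disjoint {v : List A | v.length < w.length ∧ M.eval v ∈ M.accept}
      {v : List A | v.length = w.length ∧
        (List.Lex (· < ·) v w ∧ M.eval v ∈ M.accept)} := by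
    rw [Set.disjoint_left]
    rintro v ⟨hl, _⟩ ⟨he, _⟩
    omega
  rw [show ansVal M.accepts w = ({v | v ∈ M.accepts ∧ radixLt v w} : Set (List A)).ncard from rfl,
    hset, Set.ncard_union_eq hdisj hfin1 hfin2, ncard_lt_len, ncard_eq_Nc,
    ← Finset.sum_add_distrib]

end ANSAux

/-- The enumerating series of a rational abstract numeration system is
`ℕ`-recognizable: there is an `ℕ`-representation `(η, κ, ξ)` whose value on a
word `w` is `val_L(w) + 1` if `w ∈ L` and `0` otherwise. -/
theorem enumerating_series_is_N_rational {A : Type*} [Fintype A] [LinearOrder A]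
    (L : Language A) (hreg : L.IsRegular) (hinf : (L : Set (List A)).Infinite) :
    ∃ (n : ℕ) (κ : List A → Matrix (Fin n) (Fin n) ℕ) (η ξ : Fin n → ℕ),
      κ [] = 1 ∧ (∀ u v : List A, κ (u ++ v) = κ u * κ v) ∧
      (∀ w ∈ L, η ⬝ᵥ (κ w *ᵥ ξ) = ansVal L w + 1) ∧
      (∀ w ∉ L, η ⬝ᵥ (κ w *ᵥ ξ) = 0) := by
  obtain ⟨σ, hfin, M, hML⟩ := hreg
  letI : Fintype σ := hfin
  letI : DecidableEq σ := Classical.decEq σ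
  letI : DecidablePred (· ∈ M.accept) := Classical.decPred _
  let e : ANSAux.I σ ≃ Fin (Fintype.card (ANSAux.I σ)) := Fintype.equivFin _
  have hval : ∀ w : List A,
      (ANSAux.eta M ∘ e.symm) ⬝ᵥ
          ((ANSAux.kap M w).submatrix e.symm e.symm *ᵥ (ANSAux.xi M ∘ e.symm))
        = ANSAux.eta M ⬝ᵥ (ANSAux.kap M w *ᵥ ANSAux.xi M) := by
    intro w
    rw [Matrix.submatrix_mulVec_equiv]
    have hxi : (ANSAux.xi M ∘ e.symm) ∘ e.symm.symm = ANSAux.xi M := by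
      funext i; simp
    rw [hxi]
    exact Fintype.sum_equiv e.symm _ _ fun i => rfl
  refine ⟨Fintype.card (ANSAux.I σ),
    fun w => (ANSAux.kap M w).submatrix e.symm e.symm,
    ANSAux.eta M ∘ e.symm, ANSAux.xi M ∘ e.symm, ?_, ?_, ?_, ?_⟩
  · dsimp only
    rw [ANSAux.kap_nil]
    exact Matrix.submatrix_one_equiv e.symm
  · intro u v
    dsimp only
    rw [ANSAux.kap_append, ← Matrix.submatrix_mul_equiv _ _ _ e.symm _]
  · intro w hw
    dsimp only
    rw [hval, ANSAux.final_val]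
    have hacc : M.eval w ∈ M.accept := by
      rw [← hML] at hw
      exact (DFA.mem_accepts M).mp hw
    rw [if_pos hacc, one_mul, ← ANSAux.ansVal_eq, hML]
    ring
  · intro w hw
    dsimp only
    rw [hval, ANSAux.final_val]
    have hacc : M.eval w ∉ M.accept := by
      rw [← hML] at hw
      exact fun hc => hw ((DFA.mem_accepts M).mpr hc)
    rw [if_neg hacc, zero_mul]
end

section
/- Iterative value computation is correct: given an ℕ-representation (λ, μ, ν) of an unambiguous automaton recognizing L, define by induction on prefixes of a word w = a_1⋯a_ℓ: α(ε) = λ, γ(ε) = 0, α(u·a) = α(u)·μ(a), γ(u·a) = λ + α(u)·σ_a + γ(u)·σ, where σ_a = Σ_{b<a} μ(b) and σ = Σ_{b∈A} μ(b). Then for every w ∈ L, γ(w)·ν = val_L(w). -/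
open Matrix

/-- The pair `(α(w), γ(w))` computed iteratively along the letters of `w`:
`α(ε) = λ`, `γ(ε) = 0`, `α(u·a) = α(u)·μ(a)`,
`γ(u·a) = λ + α(u)·σ_a + γ(u)·σ`. -/
def alphaGamma {A : Type*} [Fintype A] [LinearOrder A] {k : ℕ}
    (μ1 : A → Matrix (Fin k) (Fin k) ℕ) (lam : Fin k → ℕ) (w : List A) :
    (Fin k → ℕ) × (Fin k → ℕ) :=
  w.foldl
    (fun p a =>
      (p.1 ᵥ* μ1 a,
       lam + p.1 ᵥ* (∑ b ∈ Finset.univ.filter (· < a), μ1 b) + p.2 ᵥ* (∑ b : A, μ1 b)))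
    (lam, 0)

section Helpers

variable {A : Type*} [LinearOrder A]

lemma lex_cons_iff' {a b : A} {l1 l2 : List A} :
    List.Lex (· < ·) (a :: l1) (b :: l2) ↔ a < b ∨ (a = b ∧ List.Lex (· < ·) l1 l2) := by
  constructor
  · intro h
    cases h with
    | cons h => exact Or.inr ⟨rfl, h⟩
    | rel h => exact Or.inl h
  · rintro (h | ⟨rfl, h⟩)
    exacts [List.Lex.rel h, List.Lex.cons h]

lemma lex_irrefl : ∀ u : List A, ¬ List.Lex (· < ·) u u := by
  intro u h
  induction u with
  | nil => cases h
  | cons a t ih =>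
    rcases lex_cons_iff'.mp h with h' | ⟨_, h'⟩
    · exact absurd h' (lt_irrefl a)
    · exact ih h'

lemma radixLt_irrefl (u : List A) : ¬ radixLt u u := by
  rintro (h | ⟨_, h⟩)
  · exact absurd h (lt_irrefl _)
  · exact lex_irrefl u h

lemma lex_append_singleton : ∀ (v u : List A), v.length = u.length → ∀ (b a : A),
    (List.Lex (· < ·) (v ++ [b]) (u ++ [a]) ↔
      List.Lex (· < ·) v u ∨ (v = u ∧ b < a)) := by
  intro v
  induction v with
  | nil =>
    intro u hu b a
    have : u = [] := by cases u <;> simp_all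
    subst this
    simp only [List.nil_append, List.lex_singleton_iff]
    constructor
    · intro h; exact Or.inr ⟨trivial, h⟩
    · rintro (h | ⟨_, h⟩)
      · cases h
      · exact h
  | cons c v' ih =>
    intro u hu b a
    match u with
    | [] => simp at hu
    | d :: u' =>
      simp only [List.length_cons, Nat.succ_inj] at hu
      simp only [List.cons_append, lex_cons_iff', ih u' hu b a]
      constructor
      · rintro (h | ⟨rfl, h | ⟨rfl, h⟩⟩)
        · exact Or.inl (Or.inl h)
        · exact Or.inl (Or.inr ⟨rfl, h⟩)
        · exact Or.inr ⟨rfl, h⟩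
      · rintro ((h | ⟨rfl, h⟩) | ⟨heq, h⟩)
        · exact Or.inl h
        · exact Or.inr ⟨rfl, Or.inl h⟩
        · rw [List.cons.injEq] at heq
          exact Or.inr ⟨heq.1, Or.inr ⟨heq.2, h⟩⟩

lemma radixLt_finite [Finite A] (u : List A) : {v : List A | radixLt v u}.Finite := by
  classical
  have : {v : List A | radixLt v u} ⊆ {v : List A | v.length ≤ u.length} := by
    rintro v (h | ⟨h, _⟩)
    · exact le_of_lt h
    · exact le_of_eq h
  exact (List.finite_length_le A u.length).subset this

lemma radixLt_nil (v : List A) : ¬ radixLt v [] := by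
  rintro (h | ⟨h, hl⟩)
  · simp at h
  · exact List.not_lex_nil hl

lemma radixLt_append_singleton (v u : List A) (a : A) :
    radixLt v (u ++ [a]) ↔
      v = [] ∨ ∃ v' b, v = v' ++ [b] ∧ (radixLt v' u ∨ (v' = u ∧ b < a)) := by
  rcases List.eq_nil_or_concat v with rfl | ⟨v', b, rfl⟩
  · simp [radixLt]
  · rw [List.concat_eq_append]
    have hinj : ∀ x (c : A), v' ++ [b] = x ++ [c] → v' = x ∧ b = c := by
      intro x c hx
      have := List.append_inj' hx rfl
      exact ⟨this.1, by simpa using this.2⟩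
    simp only [radixLt, List.length_append, List.length_singleton]
    constructor
    · rintro (h | ⟨h, hl⟩)
      · exact Or.inr ⟨v', b, rfl, Or.inl (Or.inl (by omega))⟩
      · have h' : v'.length = u.length := by omega
        rcases (lex_append_singleton v' u h' b a).mp hl with hx | hx
        · exact Or.inr ⟨v', b, rfl, Or.inl (Or.inr ⟨h', hx⟩)⟩
        · exact Or.inr ⟨v', b, rfl, Or.inr hx⟩
    · rintro (h | ⟨x, c, hx, hcase⟩)
      · simp at h
      · obtain ⟨rfl, rfl⟩ := hinj x c hx
        rcases hcase with (h | ⟨h, hl⟩) | ⟨rfl, hb⟩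
        · exact Or.inl (by omega)
        · exact Or.inr ⟨by omega, (lex_append_singleton v' u h b a).mpr (Or.inl hl)⟩
        · exact Or.inr ⟨rfl, (lex_append_singleton v' v' rfl b a).mpr (Or.inr ⟨rfl, hb⟩)⟩

lemma sum_vecMul'' {k : ℕ} {ι : Type*} (s : Finset ι) (f : ι → Fin k → ℕ)
    (M : Matrix (Fin k) (Fin k) ℕ) :
    (∑ i ∈ s, f i) ᵥ* M = ∑ i ∈ s, f i ᵥ* M := by
  ext j
  simp only [Matrix.vecMul, dotProduct, Finset.sum_apply, Finset.sum_mul]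
  exact Finset.sum_comm

lemma vecMul_sum'' {k : ℕ} {ι : Type*} (s : Finset ι) (x : Fin k → ℕ)
    (M : ι → Matrix (Fin k) (Fin k) ℕ) :
    x ᵥ* (∑ i ∈ s, M i) = ∑ i ∈ s, x ᵥ* M i := by
  ext j
  rw [Finset.sum_apply]
  simp only [Matrix.vecMul, dotProduct, Matrix.sum_apply, Finset.mul_sum]
  exact Finset.sum_comm

lemma sum_dotProduct'' {k : ℕ} {ι : Type*} (s : Finset ι) (f : ι → Fin k → ℕ)
    (ν : Fin k → ℕ) :
    (∑ i ∈ s, f i) ⬝ᵥ ν = ∑ i ∈ s, f i ⬝ᵥ ν := by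
  simp only [dotProduct, Finset.sum_apply, Finset.sum_mul]
  exact Finset.sum_comm

end Helpers

/-- Correctness of the iterative value computation: for every `w ∈ L`,
`γ(w)·ν = val_L(w)`. -/
theorem alphaGamma_computes_value {A : Type*} [Fintype A] [LinearOrder A]
    (k : ℕ) (μ : List A → Matrix (Fin k) (Fin k) ℕ)
    (hμ1 : μ [] = 1) (hμm : ∀ u v : List A, μ (u ++ v) = μ u * μ v)
    (lam ν : Fin k → ℕ) (L : Set (List A)) [DecidablePred (· ∈ L)]
    (hchar : ∀ v : List A, lam ⬝ᵥ (μ v *ᵥ ν) = if v ∈ L then 1 else 0)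
    (w : List A) (hw : w ∈ L) :
    (alphaGamma (fun a => μ [a]) lam w).2 ⬝ᵥ ν = ansVal L w := by
  classical
  set μ1 : A → Matrix (Fin k) (Fin k) ℕ := fun a => μ [a] with hμ1def
  set T : List A → Finset (List A) := fun u => (radixLt_finite u).toFinset with hTdef
  have hmemT : ∀ u v : List A, v ∈ T u ↔ radixLt v u := by
    intro u v
    simp [hTdef, Set.Finite.mem_toFinset]
  have hstep : ∀ (u : List A) (a : A), alphaGamma μ1 lam (u ++ [a]) =
      ((alphaGamma μ1 lam u).1 ᵥ* μ1 a,
       lam + (alphaGamma μ1 lam u).1 ᵥ* (∑ b ∈ Finset.univ.filter (· < a), μ1 b)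
           + (alphaGamma μ1 lam u).2 ᵥ* (∑ b : A, μ1 b)) := by
    intro u a
    simp [alphaGamma, List.foldl_append]
  have key : ∀ u : List A, (alphaGamma μ1 lam u).1 = lam ᵥ* μ u ∧
      (alphaGamma μ1 lam u).2 = ∑ v ∈ T u, lam ᵥ* μ v := by
    intro u
    induction u using List.reverseRecOn with
    | nil =>
      have hTnil : T [] = ∅ := by
        ext v
        simp only [hmemT, Finset.notMem_empty, iff_false]
        exact radixLt_nil v
      constructor
      · simp [alphaGamma, hμ1, Matrix.vecMul_one]
      · simp [alphaGamma, hTnil]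
    | append_singleton u a ih =>
      obtain ⟨ihα, ihγ⟩ := ih
      have hinj1 : Set.InjOn (fun p : List A × A => p.1 ++ [p.2])
          ↑(T u ×ˢ (Finset.univ : Finset A)) := by
        rintro ⟨x, c⟩ - ⟨y, d⟩ - h
        simp only at h
        have := List.append_inj' h rfl
        obtain ⟨rfl, h2⟩ := this
        obtain rfl : c = d := by simpa using h2
        rfl
      have hinj2 : Set.InjOn (fun b : A => u ++ [b])
          ↑(Finset.univ.filter (· < a)) := by
        rintro x - y - h
        simpa using List.append_inj' h rfl |>.2
      have hT : T (u ++ [a]) = insert ([] : List A)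
          (((T u ×ˢ (Finset.univ : Finset A)).image fun p => p.1 ++ [p.2]) ∪
           ((Finset.univ.filter (· < a)).image fun b => u ++ [b])) := by
        ext v
        simp only [hmemT, radixLt_append_singleton, Finset.mem_insert, Finset.mem_union,
          Finset.mem_image, Finset.mem_product, Finset.mem_filter, Finset.mem_univ, true_and,
          and_true, Prod.exists]
        constructor
        · rintro (h | ⟨v', b, rfl, h | ⟨rfl, hb⟩⟩)
          · exact Or.inl h
          · exact Or.inr (Or.inl ⟨v', b, h, rfl⟩)
          · exact Or.inr (Or.inr ⟨b, hb, rfl⟩)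
        · rintro (h | (⟨v', b, hv', rfl⟩ | ⟨b, hb, rfl⟩))
          · exact Or.inl h
          · exact Or.inr ⟨v', b, rfl, Or.inl hv'⟩
          · exact Or.inr ⟨u, b, rfl, Or.inr ⟨rfl, hb⟩⟩
      have hnotmem : ([] : List A) ∉
          ((T u ×ˢ (Finset.univ : Finset A)).image fun p => p.1 ++ [p.2]) ∪
           ((Finset.univ.filter (· < a)).image fun b => u ++ [b]) := by
        simp only [Finset.mem_union, Finset.mem_image, not_or, not_exists]
        constructor
        · rintro ⟨x, c⟩ ⟨-, h⟩
          simp at h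
        · rintro b ⟨-, h⟩
          simp at h
      have hdisj : Disjoint
          ((T u ×ˢ (Finset.univ : Finset A)).image fun p => p.1 ++ [p.2])
          ((Finset.univ.filter (· < a)).image fun b => u ++ [b]) := by
        rw [Finset.disjoint_left]
        rintro x hx1 hx2
        simp only [Finset.mem_image, Finset.mem_product, Finset.mem_filter, Finset.mem_univ,
          true_and, and_true, Prod.exists] at hx1 hx2
        obtain ⟨v', b, hv', rfl⟩ := hx1
        obtain ⟨c, hc, hx⟩ := hx2
        obtain ⟨rfl, -⟩ := List.append_inj' hx rfl
        exact radixLt_irrefl u ((hmemT u u).mp hv')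
      constructor
      · rw [hstep]
        simp only [ihα]
        rw [Matrix.vecMul_vecMul, ← hμm]
      · rw [hstep]
        simp only [ihα, ihγ]
        rw [hT, Finset.sum_insert hnotmem, Finset.sum_union hdisj,
          Finset.sum_image (fun x hx y hy h => hinj1 hx hy h),
          Finset.sum_image (fun x hx y hy h => hinj2 hx hy h)]
        have hsplit : ∀ (v : List A) (b : A),
            lam ᵥ* μ (v ++ [b]) = (lam ᵥ* μ v) ᵥ* μ1 b := by
          intro v b
          rw [hμ1def]
          rw [hμm, ← Matrix.vecMul_vecMul]
        simp only [hsplit, Finset.sum_product, vecMul_sum'', sum_vecMul'', hμ1,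
          Matrix.vecMul_one]
        rw [Finset.sum_comm]
        abel
  rw [(key w).2, sum_dotProduct'']
  have : ∀ v ∈ T w, (lam ᵥ* μ v) ⬝ᵥ ν = if v ∈ L then 1 else 0 := by
    intro v _
    rw [← dotProduct_mulVec, hchar]
  rw [Finset.sum_congr rfl this, ← Finset.card_filter]
  have hset : {v ∈ L | radixLt v w} = ↑((T w).filter (· ∈ L)) := by
    ext v
    simp only [Set.mem_setOf_eq, Finset.coe_filter, hmemT]
    tauto
  rw [ansVal, hset, Set.ncard_coe_finset]
end

section
/- Let L ⊆ A* be recognized by a deterministic automaton with k states and fix integers p ≥ 1 and 0 ≤ r < p. Then the language rep_L(pℕ + r) = {w ∈ L : val_L(w) ≡ r mod p} of representations of integers congruent to r modulo p is recognized by a deterministic automaton with at most k·p^k states; in particular it is a rational language. -/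
namespace RepAux

variable {A : Type*} [Fintype A] [LinearOrder A] {Q : Type*} [Fintype Q] [DecidableEq Q]

lemma lex_cons_iff {x y : A} {u v : List A} :
    List.Lex (· < ·) (x :: u) (y :: v) ↔ x < y ∨ (x = y ∧ List.Lex (· < ·) u v) := by
  constructor
  · intro h
    cases h with
    | cons h => exact Or.inr ⟨rfl, h⟩
    | rel h => exact Or.inl h
  · rintro (h | ⟨rfl, h⟩)
    · exact List.Lex.rel h
    · exact List.Lex.cons h

lemma lex_concat_concat {u v : List A} (h : u.length = v.length) (b a : A) :
    List.Lex (· < ·) (u ++ [b]) (v ++ [a]) ↔ List.Lex (· < ·) u v ∨ (u = v ∧ b < a) := by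
  induction u generalizing v with
  | nil =>
    match v with
    | [] => simp
    | c :: v => simp at h
  | cons x u ih =>
    match v with
    | [] => simp at h
    | y :: v =>
      simp only [List.length_cons, Nat.succ_inj] at h
      rw [List.cons_append, List.cons_append, lex_cons_iff, lex_cons_iff, ih h]
      simp only [List.cons.injEq]
      tauto

lemma concat_eq_concat {u v : List A} {b c : A} (h : u ++ [b] = v ++ [c]) :
    u = v ∧ b = c := by
  have h' := congrArg List.reverse h
  simp only [List.reverse_append, List.reverse_cons, List.reverse_nil, List.nil_append,
    List.singleton_append, List.cons.injEq] at h'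
  exact ⟨by simpa using congrArg List.reverse h'.2, h'.1⟩

lemma not_lex_self (w : List A) : ¬ List.Lex (· < ·) w w := by
  induction w with
  | nil => exact List.not_lex_nil
  | cons x u ih =>
    intro h
    rcases lex_cons_iff.1 h with h | ⟨_, h⟩
    · exact lt_irrefl _ h
    · exact ih h

lemma not_radixLt_self (w : List A) : ¬ radixLt w w := by
  rintro (h | ⟨-, h⟩)
  · omega
  · exact not_lex_self w h

lemma radixLt_length_le {v w : List A} (h : radixLt v w) : v.length ≤ w.length := by
  rcases h with h | ⟨h, _⟩ <;> omega

lemma radixLe_concat_iff {v w : List A} {b a : A} :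
    (radixLt (v ++ [b]) (w ++ [a]) ∨ v ++ [b] = w ++ [a]) ↔
      (radixLt v w ∨ (v = w ∧ b ≤ a)) := by
  constructor
  · rintro (h | h)
    · rcases h with h | ⟨hl, hlex⟩
      · simp only [List.length_append, List.length_singleton] at h
        exact Or.inl (Or.inl (by omega))
      · simp only [List.length_append, List.length_singleton] at hl
        have hl' : v.length = w.length := by omega
        rcases (lex_concat_concat hl' b a).1 hlex with h' | ⟨rfl, h'⟩
        · exact Or.inl (Or.inr ⟨hl', h'⟩)
        · exact Or.inr ⟨rfl, le_of_lt h'⟩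
    · obtain ⟨rfl, hb⟩ := concat_eq_concat h
      exact Or.inr ⟨rfl, le_of_eq hb⟩
  · rintro (h | ⟨rfl, hba⟩)
    · rcases h with h | ⟨hl, hlex⟩
      · exact Or.inl (Or.inl (by simp; omega))
      · exact Or.inl (Or.inr ⟨by simp [hl], (lex_concat_concat hl b a).2 (Or.inl hlex)⟩)
    · rcases lt_or_eq_of_le hba with h | rfl
      · exact Or.inl (Or.inr ⟨by simp, (lex_concat_concat rfl b a).2 (Or.inr ⟨rfl, h⟩)⟩)
      · exact Or.inr rfl

variable (M : DFA A Q)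

/-- Number of words radix-`≤ w` evaluating to state `q`. -/
noncomputable def Scnt (w : List A) (q : Q) : ℕ :=
  {v | (radixLt v w ∨ v = w) ∧ M.eval v = q}.ncard

/-- Number of words radix-`< w` evaluating to state `q`. -/
noncomputable def Tcnt (w : List A) (q : Q) : ℕ :=
  {v | radixLt v w ∧ M.eval v = q}.ncard

lemma Sfin (w : List A) (q : Q) : {v | (radixLt v w ∨ v = w) ∧ M.eval v = q}.Finite := by
  apply (List.finite_length_le A w.length).subset
  rintro v ⟨h | rfl, _⟩
  · exact radixLt_length_le h
  · exact Nat.le_refl _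

lemma Tfin (w : List A) (q : Q) : {v | radixLt v w ∧ M.eval v = q}.Finite := by
  apply (List.finite_length_le A w.length).subset
  rintro v ⟨h, _⟩
  exact radixLt_length_le h

lemma Scnt_nil (q : Q) : Scnt M [] q = if q = M.start then 1 else 0 := by
  have hs : {v | (radixLt v ([] : List A) ∨ v = []) ∧ M.eval v = q} =
      if q = M.start then {([] : List A)} else ∅ := by
    ext v
    have hnlt : ¬ radixLt v ([] : List A) := by
      rintro (h | ⟨h, hlex⟩)
      · simp at h
      · exact List.not_lex_nil hlex
    split_ifs with h
    · subst h
      simp only [Set.mem_setOf_eq, Set.mem_singleton_iff]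
      constructor
      · rintro ⟨h | rfl, _⟩
        · exact absurd h hnlt
        · rfl
      · rintro rfl
        exact ⟨Or.inr rfl, rfl⟩
    · simp only [Set.mem_setOf_eq, Set.mem_empty_iff_false, iff_false]
      rintro ⟨h' | rfl, hev⟩
      · exact hnlt h'
      · exact h (by simpa using hev.symm)
  rw [Scnt, hs]
  split_ifs <;> simp

lemma Scnt_eq_Tcnt (w : List A) (q : Q) :
    Scnt M w q = Tcnt M w q + (if q = M.eval w then 1 else 0) := by
  have hs : {v | (radixLt v w ∨ v = w) ∧ M.eval v = q} =
      {v | radixLt v w ∧ M.eval v = q} ∪ (if q = M.eval w then {w} else ∅) := by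
    ext v
    split_ifs with h
    · subst h
      simp only [Set.mem_setOf_eq, Set.union_singleton, Set.mem_insert_iff]
      constructor
      · rintro ⟨h | rfl, hev⟩
        · exact Or.inr ⟨h, hev⟩
        · exact Or.inl rfl
      · rintro (rfl | ⟨h, hev⟩)
        · exact ⟨Or.inr rfl, rfl⟩
        · exact ⟨Or.inl h, hev⟩
    · simp only [Set.mem_setOf_eq, Set.union_empty]
      constructor
      · rintro ⟨h' | rfl, hev⟩
        · exact ⟨h', hev⟩
        · exact absurd hev.symm h
      · rintro ⟨h', hev⟩
        exact ⟨Or.inl h', hev⟩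
  rw [Scnt, hs, Set.ncard_union_eq ?_ (Tfin M w q) ?_]
  · congr 1
    split_ifs <;> simp
  · rw [Set.disjoint_left]
    rintro v ⟨hlt, _⟩ hv
    split_ifs at hv with h
    · rcases hv with rfl
      exact not_radixLt_self _ hlt
    · exact hv
  · split_ifs <;> simp [Set.finite_singleton]

lemma Scnt_concat (w : List A) (a : A) (q : Q) :
    Scnt M (w ++ [a]) q =
      (if q = M.start then 1 else 0)
      + ∑ q' : Q, Tcnt M w q' * (Finset.univ.filter fun b => M.step q' b = q).card
      + (Finset.univ.filter fun b : A => b ≤ a ∧ M.step (M.eval w) b = q).card := by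
  classical
  set E : Set (List A) := {v | v = [] ∧ q = M.start} with hE
  set P1 : Set (List A × A) := {x | radixLt x.1 w ∧ M.step (M.eval x.1) x.2 = q} with hP1
  set P2 : Set (List A × A) := {x | x.1 = w ∧ x.2 ≤ a ∧ M.step (M.eval w) x.2 = q} with hP2
  have hinj : Function.Injective (fun x : List A × A => x.1 ++ [x.2]) := by
    rintro ⟨u, b⟩ ⟨v, c⟩ h
    simp only at h
    obtain ⟨h1, h2⟩ := concat_eq_concat h
    simp [h1, h2]
  have hsplit : {v | (radixLt v (w ++ [a]) ∨ v = w ++ [a]) ∧ M.eval v = q} =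
      E ∪ (fun x : List A × A => x.1 ++ [x.2]) '' (P1 ∪ P2) := by
    ext v
    constructor
    · rintro ⟨hle, hev⟩
      rcases List.eq_nil_or_concat' v with rfl | ⟨v', b, rfl⟩
      · left
        exact ⟨rfl, by simpa using hev.symm⟩
      · right
        rw [DFA.eval_append_singleton] at hev
        rcases radixLe_concat_iff.1 hle with h | ⟨rfl, hba⟩
        · exact ⟨(v', b), Or.inl ⟨h, hev⟩, rfl⟩
        · exact ⟨(v', b), Or.inr ⟨rfl, hba, hev⟩, rfl⟩
    · rintro (⟨rfl, rfl⟩ | ⟨⟨v', b⟩, hx, rfl⟩)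
      · refine ⟨Or.inl (Or.inl ?_), rfl⟩
        simp
      · rcases hx with ⟨hlt, hst⟩ | ⟨rfl, hba, hst⟩
        · exact ⟨radixLe_concat_iff.2 (Or.inl hlt), by rwa [DFA.eval_append_singleton]⟩
        · exact ⟨radixLe_concat_iff.2 (Or.inr ⟨rfl, hba⟩), by rwa [DFA.eval_append_singleton]⟩
  have hEfin : E.Finite := (Set.finite_singleton ([] : List A)).subset (by rintro v ⟨rfl, _⟩; simp)
  have hP1fin : P1.Finite := by
    apply ((List.finite_length_le A w.length).prod (Set.finite_univ (α := A))).subset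
    rintro ⟨v, b⟩ ⟨h, _⟩
    exact ⟨radixLt_length_le h, trivial⟩
  have hP2fin : P2.Finite := by
    apply ((Set.finite_singleton w).prod (Set.finite_univ (α := A))).subset
    rintro ⟨v, b⟩ ⟨rfl, _⟩
    exact ⟨rfl, trivial⟩
  have hdisjE : Disjoint E ((fun x : List A × A => x.1 ++ [x.2]) '' (P1 ∪ P2)) := by
    rw [Set.disjoint_left]
    rintro v ⟨rfl, _⟩ ⟨⟨v', b⟩, _, heq⟩
    simp at heq
  have hdisjP : Disjoint P1 P2 := by
    rw [Set.disjoint_left]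
    rintro ⟨v, b⟩ ⟨hlt, _⟩ ⟨rfl, _⟩
    exact not_radixLt_self _ hlt
  rw [Scnt, hsplit, Set.ncard_union_eq hdisjE hEfin ((hP1fin.union hP2fin).image _),
    Set.ncard_image_of_injective _ hinj, Set.ncard_union_eq hdisjP hP1fin hP2fin]
  have hEcard : E.ncard = if q = M.start then 1 else 0 := by
    by_cases h : q = M.start
    · rw [if_pos h]
      have : E = {([] : List A)} := by ext v; simp [hE, h]
      rw [this, Set.ncard_singleton]
    · rw [if_neg h]
      have : E = ∅ := by ext v; simp [hE, h]
      rw [this, Set.ncard_empty]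
  have hP2card : P2.ncard =
      (Finset.univ.filter fun b : A => b ≤ a ∧ M.step (M.eval w) b = q).card := by
    have himg : P2 = (fun b : A => (w, b)) '' {b | b ≤ a ∧ M.step (M.eval w) b = q} := by
      ext ⟨v, b⟩
      simp only [hP2, Set.mem_setOf_eq, Set.mem_image, Prod.mk.injEq]
      constructor
      · rintro ⟨rfl, h1, h2⟩
        exact ⟨b, ⟨h1, h2⟩, rfl, rfl⟩
      · rintro ⟨c, ⟨h1, h2⟩, rfl, rfl⟩
        exact ⟨rfl, h1, h2⟩
    rw [himg, Set.ncard_image_of_injective _ (fun b c h => by simpa using h)]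
    rw [show {b : A | b ≤ a ∧ M.step (M.eval w) b = q} =
      ↑(Finset.univ.filter fun b : A => b ≤ a ∧ M.step (M.eval w) b = q) by ext; simp,
      Set.ncard_coe_finset]
  have hP1card : P1.ncard =
      ∑ q' : Q, Tcnt M w q' * (Finset.univ.filter fun b => M.step q' b = q).card := by
    have hbi : P1 = ↑(Finset.univ.biUnion (fun y : Q × A =>
        if M.step y.1 y.2 = q then ((Tfin M w y.1).toFinset ×ˢ ({y.2} : Finset A)) else ∅)) := by
      ext ⟨v, b⟩
      rw [Finset.mem_coe, Finset.mem_biUnion]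
      show radixLt v w ∧ M.step (M.eval v) b = q ↔ _
      constructor
      · rintro ⟨hlt, hst⟩
        refine ⟨(M.eval v, b), Finset.mem_univ _, ?_⟩
        rw [if_pos hst, Finset.mem_product, Set.Finite.mem_toFinset]
        exact ⟨⟨hlt, rfl⟩, Finset.mem_singleton_self _⟩
      · rintro ⟨⟨q', c⟩, -, hy⟩
        by_cases h : M.step q' c = q
        · rw [if_pos h] at hy
          simp only [Finset.mem_product, Set.Finite.mem_toFinset, Set.mem_setOf_eq,
            Finset.mem_singleton] at hy
          obtain ⟨⟨hlt, hev⟩, hbc⟩ := hy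
          exact ⟨hlt, by rw [hev, hbc]; exact h⟩
        · rw [if_neg h] at hy
          simp at hy
    rw [hbi, Set.ncard_coe_finset]
    rw [Finset.card_biUnion]
    · rw [Fintype.sum_prod_type]
      congr 1
      ext q'
      have : ∀ b : A, (if M.step q' b = q
          then ((Tfin M w q').toFinset ×ˢ ({b} : Finset A)) else ∅).card =
          if M.step q' b = q then Tcnt M w q' else 0 := by
        intro b
        split_ifs with h
        · rw [Finset.card_product, Finset.card_singleton, mul_one, Tcnt,
            Set.ncard_eq_toFinset_card _ (Tfin M w q')]
        · simp
      simp only [this]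
      rw [Finset.card_filter, Finset.mul_sum]
      congr 1
      ext b
      split_ifs <;> simp
    · rintro ⟨q1, b1⟩ - ⟨q2, b2⟩ - hne
      simp only [Function.onFun]
      split_ifs with h1 h2 h2
      · rw [Finset.disjoint_left]
        rintro ⟨v, b⟩ hv1 hv2
        simp only [Finset.mem_product, Set.Finite.mem_toFinset, Set.mem_setOf_eq,
          Finset.mem_singleton] at hv1 hv2
        obtain ⟨⟨_, he1⟩, rfl⟩ := hv1
        obtain ⟨⟨_, he2⟩, h⟩ := hv2
        exact hne (by rw [← he1, ← he2, h])
      all_goals simp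
  rw [hEcard, hP1card, hP2card]
  ring

variable (p r : ℕ)

/-- The product automaton tracking the `M`-state together with, for each state `q`,
the number (mod `p`) of radix-smaller-or-equal words reaching `q`. -/
noncomputable def countDFA [DecidablePred (· ∈ M.accept)] :
    DFA A (Q × (Q → ZMod p)) where
  step := fun x a =>
    (M.step x.1 a, fun q =>
      (if q = M.start then 1 else 0)
      + ∑ q' : Q, (x.2 q' - if q' = x.1 then 1 else 0) *
          ((Finset.univ.filter fun b => M.step q' b = q).card : ZMod p)
      + ((Finset.univ.filter fun b : A => b ≤ a ∧ M.step x.1 b = q).card : ZMod p))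
  start := (M.start, fun q => if q = M.start then 1 else 0)
  accept := {x | x.1 ∈ M.accept ∧
    ∑ q ∈ Finset.univ.filter (· ∈ M.accept), x.2 q = (r : ZMod p) + 1}

lemma countDFA_eval [DecidablePred (· ∈ M.accept)] (w : List A) :
    (countDFA M p r).eval w = (M.eval w, fun q => (Scnt M w q : ZMod p)) := by
  induction w using List.reverseRecOn with
  | nil =>
    refine Prod.ext rfl ?_
    funext q
    show (if q = M.start then (1 : ZMod p) else 0) = ((Scnt M [] q : ℕ) : ZMod p)
    rw [Scnt_nil]
    split_ifs <;> simp
  | append_singleton w a ih =>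
    rw [DFA.eval_append_singleton, ih, DFA.eval_append_singleton]
    refine Prod.ext rfl ?_
    funext q
    show (if q = M.start then (1 : ZMod p) else 0)
      + ∑ q' : Q, (((Scnt M w q' : ZMod p)) - if q' = M.eval w then 1 else 0) *
          ((Finset.univ.filter fun b => M.step q' b = q).card : ZMod p)
      + ((Finset.univ.filter fun b : A => b ≤ a ∧ M.step (M.eval w) b = q).card : ZMod p)
      = (Scnt M (w ++ [a]) q : ZMod p)
    have hT : ∀ q' : Q, ((Scnt M w q' : ZMod p)) - (if q' = M.eval w then 1 else 0)
        = (Tcnt M w q' : ZMod p) := by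
      intro q'
      rw [Scnt_eq_Tcnt]
      push_cast
      split_ifs <;> push_cast <;> ring
    simp only [hT]
    rw [Scnt_concat]
    push_cast
    split_ifs <;> push_cast <;> ring

lemma ansVal_eq_sum [DecidablePred (· ∈ M.accept)] (w : List A) :
    ansVal (M.accepts : Set (List A)) w =
      ∑ q ∈ Finset.univ.filter (· ∈ M.accept), Tcnt M w q := by
  classical
  have hset : {v ∈ (M.accepts : Set (List A)) | radixLt v w} =
      ↑(Finset.univ.biUnion (fun q : Q =>
        if q ∈ M.accept then (Tfin M w q).toFinset else ∅)) := by
    ext v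
    rw [Finset.mem_coe, Finset.mem_biUnion]
    show v ∈ (M.accepts : Set (List A)) ∧ radixLt v w ↔ _
    constructor
    · rintro ⟨hv, hlt⟩
      rw [DFA.mem_accepts] at hv
      refine ⟨M.eval v, Finset.mem_univ _, ?_⟩
      rw [if_pos hv, Set.Finite.mem_toFinset]
      exact ⟨hlt, rfl⟩
    · rintro ⟨q, -, hq⟩
      by_cases h : q ∈ M.accept
      · rw [if_pos h, Set.Finite.mem_toFinset] at hq
        obtain ⟨hlt, hev⟩ := hq
        exact ⟨by rw [DFA.mem_accepts, hev]; exact h, hlt⟩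
      · rw [if_neg h] at hq
        simp at hq
  rw [show ansVal (M.accepts : Set (List A)) w = _ from congrArg Set.ncard hset, Set.ncard_coe_finset, Finset.card_biUnion]
  · rw [Finset.sum_filter]
    congr 1
    ext q
    split_ifs with h
    · rw [Tcnt, Set.ncard_eq_toFinset_card _ (Tfin M w q)]
    · simp
  · rintro q1 - q2 - hne
    simp only [Function.onFun]
    split_ifs with h1 h2 h2
    · rw [Finset.disjoint_left]
      rintro v hv1 hv2
      rw [Set.Finite.mem_toFinset] at hv1 hv2
      simp only [Set.mem_setOf_eq] at hv1 hv2
      exact hne (hv1.2 ▸ hv2.2 ▸ rfl)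
    all_goals simp

lemma sum_Scnt [DecidablePred (· ∈ M.accept)] (w : List A) :
    ∑ q ∈ Finset.univ.filter (· ∈ M.accept), ((Scnt M w q : ℕ) : ZMod p)
      = (ansVal (M.accepts : Set (List A)) w : ZMod p)
        + (if M.eval w ∈ M.accept then 1 else 0) := by
  have hc : ∀ q ∈ Finset.univ.filter (· ∈ M.accept),
      ((Scnt M w q : ℕ) : ZMod p)
        = ((Tcnt M w q : ℕ) : ZMod p) + (if q = M.eval w then (1 : ZMod p) else 0) := by
    intro q _
    rw [Scnt_eq_Tcnt]
    push_cast
    split_ifs <;> push_cast <;> ring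
  rw [Finset.sum_congr rfl hc, Finset.sum_add_distrib, ansVal_eq_sum]
  push_cast
  congr 1
  rw [Finset.sum_ite_eq' (Finset.univ.filter (· ∈ M.accept)) (M.eval w)
    (fun _ => (1 : ZMod p))]
  simp [Finset.mem_filter]

lemma countDFA_accepts (hr : r < p) [DecidablePred (· ∈ M.accept)] :
    (countDFA M p r).accepts =
      {w | w ∈ M.accepts ∧ ansVal (M.accepts : Set (List A)) w % p = r} := by
  ext w
  rw [DFA.mem_accepts, countDFA_eval]
  show (M.eval w ∈ M.accept ∧
    ∑ q ∈ Finset.univ.filter (· ∈ M.accept), ((Scnt M w q : ℕ) : ZMod p) = (r : ZMod p) + 1) ↔ _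
  simp only [Set.mem_setOf_eq, DFA.mem_accepts]
  constructor
  · rintro ⟨hacc, hsum⟩
    refine ⟨hacc, ?_⟩
    rw [sum_Scnt, if_pos hacc] at hsum
    have h1 : (ansVal (M.accepts : Set (List A)) w : ZMod p) = (r : ZMod p) :=
      add_right_cancel hsum
    have h2 := (ZMod.natCast_eq_natCast_iff _ _ _).1 h1
    rw [Nat.ModEq] at h2
    rw [h2, Nat.mod_eq_of_lt hr]
  · rintro ⟨hacc, hmod⟩
    refine ⟨hacc, ?_⟩
    rw [sum_Scnt, if_pos hacc]
    congr 1
    rw [ZMod.natCast_eq_natCast_iff, Nat.ModEq, hmod, Nat.mod_eq_of_lt hr]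

/-- Transport a DFA along an equivalence of state spaces. -/
def reindexDFA {A : Type*} {Q : Type*} {Q' : Type*} (e : Q ≃ Q') (M : DFA A Q) : DFA A Q' where
  step s a := e (M.step (e.symm s) a)
  start := e M.start
  accept := {s | e.symm s ∈ M.accept}

lemma reindexDFA_eval {A : Type*} {Q Q' : Type*} (e : Q ≃ Q') (M : DFA A Q) (w : List A) :
    (reindexDFA e M).eval w = e (M.eval w) := by
  induction w using List.reverseRecOn with
  | nil => rfl
  | append_singleton w a ih =>
    rw [DFA.eval_append_singleton, DFA.eval_append_singleton, ih]
    show e (M.step (e.symm (e (M.eval w))) a) = _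
    rw [Equiv.symm_apply_apply]

lemma reindexDFA_accepts {A : Type*} {Q Q' : Type*} (e : Q ≃ Q') (M : DFA A Q) :
    (reindexDFA e M).accepts = M.accepts := by
  ext w
  rw [DFA.mem_accepts, DFA.mem_accepts, reindexDFA_eval]
  show e.symm (e (M.eval w)) ∈ M.accept ↔ _
  rw [Equiv.symm_apply_apply]

end RepAux

/-- If `L` is recognized by a deterministic automaton with `k` states, then for
`p ≥ 1` and `r < p`, the language of representations of the integers congruent
to `r` mod `p` is recognized by a deterministic automaton with at most `k·p^k`
states; in particular it is regular. -/
theorem rep_of_arith_progression_regular {A : Type*} [Fintype A] [LinearOrder A]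
    {Q : Type*} [Fintype Q] (k : ℕ) (hk : Fintype.card Q = k)
    (M : DFA A Q) (L : Language A) (hM : M.accepts = L)
    (hinf : (L : Set (List A)).Infinite)
    (p r : ℕ) (hp : 1 ≤ p) (hr : r < p) :
    ∃ (Q' : Type) (_ : Fintype Q') (M' : DFA A Q'),
      Fintype.card Q' ≤ k * p ^ k ∧
      M'.accepts = {w | w ∈ L ∧ ansVal L w % p = r} := by
  classical
  have : NeZero p := ⟨by omega⟩
  obtain ⟨e⟩ : Nonempty (Q ≃ Fin k) := ⟨Fintype.equivFinOfCardEq hk⟩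
  set M₂ : DFA A (Fin k) := RepAux.reindexDFA e M with hM₂
  refine ⟨Fin k × (Fin k → ZMod p), inferInstance, RepAux.countDFA M₂ p r, ?_, ?_⟩
  · rw [Fintype.card_prod, Fintype.card_fun, Fintype.card_fin, ZMod.card]
  · rw [RepAux.countDFA_accepts M₂ p r hr, RepAux.reindexDFA_accepts, hM]
end

section
/- If s: A* → ℕ is an ℕ-recognizable series and X ⊆ ℕ is an eventually periodic (recognizable) set of natural numbers, then s⁻¹(X) = {w ∈ A* : s(w) ∈ X} is a rational (regular) language. -/
open Matrix

namespace RecogSeriesAux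

variable (N p : ℕ)

/-- Threshold-`N`, period-`p` truncation. -/
def trunc (x : ℕ) : ℕ := if x < N then x else N + (x - N) % p

/-- Threshold-periodic congruence on ℕ. -/
def Rel (x y : ℕ) : Prop := x = y ∨ (N ≤ x ∧ N ≤ y ∧ x % p = y % p)

variable {N p}

theorem rel_refl (x : ℕ) : Rel N p x x := Or.inl rfl

theorem rel_symm {x y : ℕ} (h : Rel N p x y) : Rel N p y x := by
  rcases h with h | ⟨h1, h2, h3⟩
  · exact Or.inl h.symm
  · exact Or.inr ⟨h2, h1, h3.symm⟩

theorem trunc_lt (hp : 0 < p) (x : ℕ) : trunc N p x < N + p := by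
  unfold trunc
  split
  · omega
  · have := Nat.mod_lt (x - N) hp
    omega

theorem rel_trunc (x : ℕ) : Rel N p (trunc N p x) x := by
  unfold trunc
  split
  · exact Or.inl rfl
  · refine Or.inr ⟨Nat.le_add_right _ _, by omega, ?_⟩
    have h1 : (N + (x - N) % p) % p = (N + (x - N)) % p :=
      Nat.ModEq.add_left N ((x - N).mod_modEq p)
    rw [h1, Nat.add_sub_cancel' (by omega)]

theorem trunc_eq_of_rel {x y : ℕ} (h : Rel N p x y) : trunc N p x = trunc N p y := by
  rcases h with h | ⟨h1, h2, h3⟩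
  · rw [h]
  · unfold trunc
    rw [if_neg (by omega), if_neg (by omega)]
    have hmod : x - N ≡ y - N [MOD p] := by
      have : (x - N) + N ≡ (y - N) + N [MOD p] := by
        rw [Nat.sub_add_cancel h1, Nat.sub_add_cancel h2]; exact h3
      exact Nat.ModEq.add_right_cancel' N this
    rw [hmod]

theorem rel_add {x y z w : ℕ} (h1 : Rel N p x y) (h2 : Rel N p z w) :
    Rel N p (x + z) (y + w) := by
  rcases h1 with h1 | ⟨a1, a2, a3⟩ <;> rcases h2 with h2 | ⟨b1, b2, b3⟩
  · exact Or.inl (by rw [h1, h2])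
  · subst h1; exact Or.inr ⟨by omega, by omega, Nat.ModEq.add_left x b3⟩
  · subst h2; exact Or.inr ⟨by omega, by omega, Nat.ModEq.add_right z a3⟩
  · exact Or.inr ⟨by omega, by omega, Nat.ModEq.add a3 b3⟩

theorem rel_mul {x y z w : ℕ} (h1 : Rel N p x y) (h2 : Rel N p z w) :
    Rel N p (x * z) (y * w) := by
  rcases h1 with h1 | ⟨a1, a2, a3⟩ <;> rcases h2 with h2 | ⟨b1, b2, b3⟩
  · exact Or.inl (by rw [h1, h2])
  · subst h1
    rcases Nat.eq_zero_or_pos x with hx | hx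
    · exact Or.inl (by simp [hx])
    · exact Or.inr ⟨le_trans b1 (Nat.le_mul_of_pos_left z hx),
        le_trans b2 (Nat.le_mul_of_pos_left w hx), Nat.ModEq.mul_left x b3⟩
  · subst h2
    rcases Nat.eq_zero_or_pos z with hz | hz
    · exact Or.inl (by simp [hz])
    · exact Or.inr ⟨le_trans a1 (Nat.le_mul_of_pos_right x hz),
        le_trans a2 (Nat.le_mul_of_pos_right y hz), Nat.ModEq.mul_right z a3⟩
  · rcases Nat.eq_zero_or_pos z with hz | hz
    · have hN : N = 0 := by omega
      subst hN
      exact Or.inr ⟨Nat.zero_le _, Nat.zero_le _, Nat.ModEq.mul a3 b3⟩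
    · refine Or.inr ⟨?_, ?_, Nat.ModEq.mul a3 b3⟩
      · rcases Nat.eq_zero_or_pos N with hN | hN
        · simp [hN]
        · exact le_trans a1 (Nat.le_mul_of_pos_right x (by omega))
      · rcases Nat.eq_zero_or_pos N with hN | hN
        · simp [hN]
        · exact le_trans a2 (Nat.le_mul_of_pos_right y (by omega))

theorem rel_sum {ι : Type*} (t : Finset ι) (f g : ι → ℕ)
    (h : ∀ i ∈ t, Rel N p (f i) (g i)) :
    Rel N p (∑ i ∈ t, f i) (∑ i ∈ t, g i) := by
  classical
  induction t using Finset.induction_on with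
  | empty => simp [rel_refl]
  | insert _ _ hnot ih =>
    rename_i a t'
    rw [Finset.sum_insert hnot, Finset.sum_insert hnot]
    exact rel_add (h a (Finset.mem_insert_self a t'))
      (ih fun i hi => h i (Finset.mem_insert_of_mem hi))

end RecogSeriesAux

open RecogSeriesAux

/-- If `s` is an `ℕ`-recognizable series over `A*` and `X ⊆ ℕ` is an eventually
periodic (recognizable) set of natural numbers, then `s⁻¹(X)` is a regular
language. -/
theorem preimage_of_recognizable_set_regular {A : Type*} [Fintype A]
    (s : List A → ℕ) (n : ℕ) (μ : List A → Matrix (Fin n) (Fin n) ℕ)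
    (hμ1 : μ [] = 1) (hμm : ∀ u v : List A, μ (u ++ v) = μ u * μ v)
    (lam ν : Fin n → ℕ) (hs : ∀ w : List A, s w = lam ⬝ᵥ (μ w *ᵥ ν))
    (X : Set ℕ) (N p : ℕ) (hp : 0 < p)
    (hX : ∀ m ≥ N, (m ∈ X ↔ m + p ∈ X)) :
    Language.IsRegular {w : List A | s w ∈ X} := by
  classical
  -- membership in X is invariant under the congruence
  have hXstep : ∀ k m, N ≤ m → (m ∈ X ↔ m + k * p ∈ X) := by
    intro k
    induction k with
    | zero => simp
    | succ k ih =>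
      intro m hm
      have : m + (k + 1) * p = (m + k * p) + p := by ring
      rw [this]
      exact (ih m hm).trans (hX (m + k * p) (by omega))
  have hXrel : ∀ {x y : ℕ}, Rel N p x y → (x ∈ X ↔ y ∈ X) := by
    have key : ∀ x y : ℕ, x ≤ y → Rel N p x y → (x ∈ X ↔ y ∈ X) := by
      intro x y hxy h
      rcases h with h | ⟨h1, h2, h3⟩
      · rw [h]
      · have hdvd : p ∣ y - x := (Nat.modEq_iff_dvd' hxy).mp h3
        obtain ⟨k, hk⟩ := hdvd
        rw [Nat.mul_comm] at hk
        have : y = x + k * p := by omega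
        rw [this]
        exact hXstep k x h1
    intro x y h
    rcases le_total x y with hxy | hxy
    · exact key x y hxy h
    · exact (key y x hxy (rel_symm h)).symm
  -- truncation on matrices
  set T : Matrix (Fin n) (Fin n) ℕ → Matrix (Fin n) (Fin n) ℕ :=
    fun M => Matrix.of (fun i j => trunc N p (M i j)) with hT
  have hTlt : ∀ M i j, T M i j < N + p := fun M i j => trunc_lt hp _
  have hRelT : ∀ M : Matrix (Fin n) (Fin n) ℕ, ∀ i j, Rel N p (T M i j) (M i j) :=
    fun M i j => rel_trunc _
  have hTmul : ∀ M B : Matrix (Fin n) (Fin n) ℕ, T (T M * B) = T (M * B) := by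
    intro M B
    ext i j
    apply trunc_eq_of_rel
    simp only [Matrix.mul_apply]
    exact rel_sum _ _ _ (fun k _ => rel_mul (hRelT M i k) (rel_refl (B k j)))
  -- the DFA
  let σ := {M : Matrix (Fin n) (Fin n) ℕ // ∀ i j, M i j < N + p}
  have : Fintype σ := Fintype.ofInjective
    (fun M : σ => (fun i j => (⟨M.1 i j, M.2 i j⟩ : Fin (N + p))))
    (by
      intro a b hab
      apply Subtype.ext
      ext i j
      exact congrArg Fin.val (congrFun (congrFun hab i) j))
  let dfa : DFA A σ :=
    { step := fun M a => ⟨T (M.1 * μ [a]), hTlt _⟩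
      start := ⟨T (μ []), hTlt _⟩
      accept := {M | lam ⬝ᵥ (M.1 *ᵥ ν) ∈ X} }
  refine ⟨σ, this, dfa, ?_⟩
  have heval : ∀ w : List A, (dfa.eval w).1 = T (μ w) := by
    intro w
    induction w using List.reverseRecOn with
    | nil => rfl
    | append_singleton w a ih =>
      rw [DFA.eval_append_singleton]
      show T ((dfa.eval w).1 * μ [a]) = T (μ (w ++ [a]))
      rw [ih, hTmul, hμm]
  ext w
  rw [DFA.mem_accepts]
  show lam ⬝ᵥ ((dfa.eval w).1 *ᵥ ν) ∈ X ↔ s w ∈ X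
  rw [heval, hs]
  apply hXrel
  simp only [dotProduct, Matrix.mulVec]
  exact rel_sum _ _ _ (fun i _ => rel_mul (rel_refl (lam i))
    (rel_sum _ _ _ (fun j _ => rel_mul (hRelT (μ w) i j) (rel_refl (ν j)))))
end

section
/- Every recognizable (eventually periodic) set of natural numbers is L-recognizable in any rational abstract numeration system: if L ⊆ A* is an infinite regular language and X ⊆ ℕ is eventually periodic, then the set rep_L(X) = {w ∈ L : val_L(w) ∈ X} is a regular language. -/
section Counting

variable {A : Type*} [Fintype A] [LinearOrder A] {Q : Type*} (M : DFA A Q)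

/-- All words of length `n`. -/
def allW (A : Type*) [Fintype A] [DecidableEq A] : ℕ → Finset (List A)
  | 0 => {[]}
  | n + 1 => Finset.univ.biUnion fun a : A => (allW A n).image (a :: ·)

@[simp] theorem mem_allW {n : ℕ} {v : List A} : v ∈ allW A n ↔ v.length = n := by
  induction n generalizing v with
  | zero => cases v <;> simp [allW]
  | succ n ih =>
    cases v with
    | nil => simp [allW]
    | cons a v => simp [allW, ih]

open Classical in
/-- Number of words of length `n` accepted from state `q`. -/
noncomputable def cnt (q : Q) (n : ℕ) : ℕ :=
  ((allW A n).filter (fun v => M.evalFrom q v ∈ M.accept)).card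

open Classical in
/-- Number of accepted words of length `w.length` lexicographically smaller than `w`. -/
noncomputable def Dcnt (q : Q) (w : List A) : ℕ :=
  ((allW A w.length).filter
    (fun v => M.evalFrom q v ∈ M.accept ∧ List.Lex (· < ·) v w)).card

open Classical in
theorem card_filter_succ (p : List A → Prop) [DecidablePred p] (n : ℕ) :
    ((allW A (n + 1)).filter p).card
      = ∑ a : A, ((allW A n).filter (fun v => p (a :: v))).card := by
  classical
  rw [allW, Finset.filter_biUnion, Finset.card_biUnion]
  · refine Finset.sum_congr rfl fun a _ => ?_
    rw [Finset.filter_image, Finset.card_image_of_injective _ (fun x y => by simp)]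
  · intro a _ b _ hab
    simp only [Finset.disjoint_left, Finset.mem_filter, Finset.mem_image]
    rintro v ⟨⟨x, -, rfl⟩, -⟩ ⟨⟨y, -, h⟩, -⟩
    exact hab (by injection h with h1 _; exact h1.symm)

theorem cnt_succ (q : Q) (n : ℕ) : cnt M q (n + 1) = ∑ a : A, cnt M (M.step q a) n := by
  classical
  unfold cnt
  rw [card_filter_succ]
  rfl

omit [Fintype A] in
theorem lex_cons_cons_iff {b a : A} {v w : List A} :
    List.Lex (· < ·) (b :: v) (a :: w) ↔ b < a ∨ (b = a ∧ List.Lex (· < ·) v w) := by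
  constructor
  · intro h
    cases h with
    | cons h => exact Or.inr ⟨rfl, h⟩
    | rel h => exact Or.inl h
  · rintro (h | ⟨rfl, h⟩)
    · exact List.Lex.rel h
    · exact List.Lex.cons h

theorem Dcnt_cons (q : Q) (a : A) (w : List A) :
    Dcnt M q (a :: w)
      = (∑ b ∈ Finset.univ.filter (· < a), cnt M (M.step q b) w.length)
        + Dcnt M (M.step q a) w := by
  classical
  unfold Dcnt
  rw [show (a :: w).length = w.length + 1 from rfl, card_filter_succ]
  have key : ∀ b : A,
      ((allW A w.length).filter
        (fun v => M.evalFrom q (b :: v) ∈ M.accept ∧ List.Lex (· < ·) (b :: v) (a :: w))).card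
      = (if b < a then cnt M (M.step q b) w.length else 0)
        + (if b = a then Dcnt M (M.step q a) w else 0) := by
    intro b
    rcases lt_trichotomy b a with hba | rfl | hba
    · rw [if_pos hba, if_neg hba.ne, add_zero]
      unfold cnt
      congr 1
      refine Finset.filter_congr fun v _ => ?_
      simp [lex_cons_cons_iff, hba, DFA.evalFrom, List.cons_lt_cons_iff]
    · rw [if_neg (lt_irrefl b), if_pos rfl, zero_add]
      unfold Dcnt
      congr 1
      refine Finset.filter_congr fun v _ => ?_
      simp [lex_cons_cons_iff, DFA.evalFrom]
    · rw [if_neg (not_lt.2 hba.le), if_neg hba.ne', add_zero,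
        Finset.card_eq_zero, Finset.filter_eq_empty_iff]
      intro v _
      simp only [lex_cons_cons_iff, not_and]
      rintro - (h | ⟨rfl, -⟩)
      · exact absurd h (not_lt.2 hba.le)
      · exact lt_irrefl _ hba
  rw [Finset.sum_congr rfl fun b _ => key b, Finset.sum_add_distrib,
    ← Finset.sum_filter, Finset.sum_ite_eq' Finset.univ a
      (fun _ => Dcnt M (M.step q a) w), if_pos (Finset.mem_univ a)]
  rfl


/-- Partial lexicographic count: `Ecnt q u j` counts (by the first-difference position)
accepted words of length `u.length + j` lexicographically below any extension of `u`
by `j` letters, that branch off within `u`. -/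
noncomputable def Ecnt : Q → List A → ℕ → ℕ
  | _, [], _ => 0
  | q, a :: w, j =>
      (∑ b ∈ Finset.univ.filter (· < a), cnt M (M.step q b) (w.length + j))
        + Ecnt (M.step q a) w j

theorem Dcnt_eq_Ecnt (q : Q) (w : List A) : Dcnt M q w = Ecnt M q w 0 := by
  classical
  induction w generalizing q with
  | nil =>
    unfold Dcnt Ecnt
    rw [Finset.card_eq_zero, Finset.filter_eq_empty_iff]
    intro v _
    simp
  | cons a w ih =>
    rw [Dcnt_cons, ih]
    show _ = (∑ b ∈ Finset.univ.filter (· < a), cnt M (M.step q b) (w.length + 0))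
        + Ecnt M (M.step q a) w 0
    rw [Nat.add_zero]

theorem Ecnt_append (q : Q) (u v : List A) (j : ℕ) :
    Ecnt M q (u ++ v) j = Ecnt M q u (v.length + j) + Ecnt M (M.evalFrom q u) v j := by
  induction u generalizing q with
  | nil => simp [Ecnt]
  | cons a u ih =>
    have h2 : M.evalFrom q (a :: u) = M.evalFrom (M.step q a) u := rfl
    show (∑ b ∈ Finset.univ.filter (· < a), cnt M (M.step q b) ((u ++ v).length + j))
        + Ecnt M (M.step q a) (u ++ v) j
      = ((∑ b ∈ Finset.univ.filter (· < a), cnt M (M.step q b) (u.length + (v.length + j)))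
        + Ecnt M (M.step q a) u (v.length + j)) + Ecnt M (M.evalFrom q (a :: u)) v j
    rw [ih, h2, show (u ++ v).length + j = u.length + (v.length + j) by
      simp [List.length_append]; omega, Nat.add_assoc]

/-- Number of accepted words of length `< n`. -/
noncomputable def Alt (n : ℕ) : ℕ := ∑ m ∈ Finset.range n, cnt M M.start m

open Classical in
theorem Alt_eq_card (n : ℕ) :
    Alt M n = (((Finset.range n).biUnion (allW A)).filter
      (fun v => M.evalFrom M.start v ∈ M.accept)).card := by
  classical
  rw [Finset.filter_biUnion, Finset.card_biUnion]
  · rfl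
  · intro m _ m' _ hmm
    simp only [Finset.disjoint_left, Finset.mem_filter, mem_allW]
    rintro v ⟨rfl, -⟩ ⟨hv, -⟩
    exact hmm hv

theorem Alt_mono {m n : ℕ} (h : m ≤ n) : Alt M m ≤ Alt M n :=
  Finset.sum_le_sum_of_subset (Finset.range_subset_range.2 h)

theorem ansVal_eq (w : List A) :
    ansVal M.accepts w = Alt M w.length + Dcnt M M.start w := by
  classical
  have hset : {v ∈ (M.accepts : Set (List A)) | radixLt v w}
      = ↑((((Finset.range w.length).biUnion (allW A)).filter
            (fun v => M.evalFrom M.start v ∈ M.accept))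
          ∪ ((allW A w.length).filter
            (fun v => M.evalFrom M.start v ∈ M.accept ∧ List.Lex (· < ·) v w))) := by
    ext v
    simp only [Set.mem_setOf_eq, Finset.coe_union, Set.mem_union, Finset.coe_filter,
      Finset.mem_biUnion, Finset.mem_range, mem_allW, radixLt, DFA.mem_accepts, DFA.eval]
    constructor
    · rintro ⟨hv, (h | ⟨h1, h2⟩)⟩
      · exact Or.inl ⟨⟨v.length, h, rfl⟩, hv⟩
      · exact Or.inr ⟨h1, hv, h2⟩
    · rintro (⟨⟨m, hm, rfl⟩, hv⟩ | ⟨h1, hv, h2⟩)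
      · exact ⟨hv, Or.inl hm⟩
      · exact ⟨hv, Or.inr ⟨h1, h2⟩⟩
  rw [show ansVal M.accepts w = Set.ncard _ from congrArg Set.ncard hset, Set.ncard_coe_finset, Finset.card_union_of_disjoint, Alt_eq_card]
  · rfl
  · simp only [Finset.disjoint_left, Finset.mem_filter, Finset.mem_biUnion, Finset.mem_range,
      mem_allW]
    rintro v ⟨⟨m, hm, rfl⟩, -⟩ ⟨hv, -⟩
    exact absurd hv (Nat.ne_of_lt hm)

/-- Since the language is infinite, `Alt` is unbounded. -/
theorem exists_Alt_ge (hinf : (M.accepts : Set (List A)).Infinite) (Nb : ℕ) :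
    ∃ n0 : ℕ, ∀ n ≥ n0, Nb ≤ Alt M n := by
  classical
  obtain ⟨t, hts, htc⟩ := hinf.exists_subset_card_eq Nb
  refine ⟨t.sup (·.length) + 1, fun n hn => ?_⟩
  calc Nb = t.card := htc.symm
    _ ≤ Alt M n := by
      rw [Alt_eq_card]
      apply Finset.card_le_card
      intro v hv
      simp only [Finset.mem_filter, Finset.mem_biUnion, Finset.mem_range, mem_allW]
      refine ⟨⟨v.length, ?_, rfl⟩, ?_⟩
      · have : v.length ≤ t.sup (·.length) := Finset.le_sup hv
        omega
      · exact hts hv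
end Counting
/-- Any orbit of a self-map of a finite type is eventually periodic. -/
theorem iter_eventually_periodic {V : Type*} [Finite V] (Ψ : V → V) (v0 : V) :
    ∃ s t : ℕ, 0 < t ∧ ∀ n ≥ s, Ψ^[n + t] v0 = Ψ^[n] v0 := by
  obtain ⟨i, j, hne, heq⟩ := Finite.exists_ne_map_eq_of_infinite (fun n : ℕ => Ψ^[n] v0)
  rcases hne.lt_or_gt with hij | hij
  ·
    refine ⟨i, j - i, by omega, fun n hn => ?_⟩
    have h1 : n + (j - i) = (n - i) + j := by omega
    have h2 : n = (n - i) + i := by omega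
    rw [h1, Function.iterate_add_apply, ← heq, ← Function.iterate_add_apply, ← h2]
  ·
    refine ⟨j, i - j, by omega, fun n hn => ?_⟩
    have h1 : n + (i - j) = (n - j) + i := by omega
    have h2 : n = (n - j) + j := by omega
    rw [h1, Function.iterate_add_apply, heq, ← Function.iterate_add_apply, ← h2]

theorem per_iterate {V : Type*} {H : ℕ → V} {s t : ℕ}
    (hper : ∀ n ≥ s, H (n + t) = H n) : ∀ (k : ℕ), ∀ n ≥ s, H (n + k * t) = H n := by
  intro k
  induction k with
  | zero => simp
  | succ k ih =>
    intro n hn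
    have : n + (k + 1) * t = (n + k * t) + t := by ring
    rw [this, hper _ (by omega), ih n hn]

/-- Collapse of lengths: identity below `S0`, then `(· - S0) % t` above. -/
def eF (S0 t n : ℕ) : ℕ := if n < S0 then n else S0 + (n - S0) % t

theorem eF_lt {S0 t : ℕ} (ht : 0 < t) (n : ℕ) : eF S0 t n < S0 + t := by
  unfold eF; split
  · omega
  · have := Nat.mod_lt (n - S0) ht; omega

theorem eF_idem {S0 t : ℕ} (ht : 0 < t) (n : ℕ) : eF S0 t (eF S0 t n) = eF S0 t n := by
  unfold eF
  split
  · simp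
  · have h1 : ¬ (S0 + (n - S0) % t < S0) := by omega
    rw [if_neg h1]
    have hlt := Nat.mod_lt (n - S0) ht
    have h2 : S0 + (n - S0) % t - S0 = (n - S0) % t := by omega
    rw [h2, Nat.mod_eq_of_lt hlt]

theorem eF_succ {S0 t : ℕ} {m m' : ℕ} (h : eF S0 t m = eF S0 t m') :
    eF S0 t (m + 1) = eF S0 t (m' + 1) := by
  unfold eF at *
  split at h <;> split at h
  · subst h; rfl
  · -- m < S0, m' ≥ S0 : impossible since LHS < S0 ≤ RHS
    omega
  · omega
  · -- both ≥ S0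
    rename_i h1 h2
    have hm : m + 1 - S0 = (m - S0) + 1 := by omega
    have hm' : m' + 1 - S0 = (m' - S0) + 1 := by omega
    have h3 : (m - S0) % t = (m' - S0) % t := by omega
    rw [if_neg (by omega), if_neg (by omega), hm, hm', Nat.add_mod (m - S0) 1,
      h3, ← Nat.add_mod]

theorem eF_add {S0 t : ℕ} {m m' : ℕ} (h : eF S0 t m = eF S0 t m') (x : ℕ) :
    eF S0 t (m + x) = eF S0 t (m' + x) := by
  induction x with
  | zero => simpa using h
  | succ x ih => rw [← Nat.add_assoc, ← Nat.add_assoc]; exact eF_succ ih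

/-- If `H` is `t`-periodic from `s` on, then it only depends on `eF S0 t` for any `S0 ≥ s`. -/
theorem congr_of_eF {V : Type*} {H : ℕ → V} {s t S0 : ℕ} (ht : 0 < t) (hS0 : s ≤ S0)
    (hper : ∀ n ≥ s, H (n + t) = H n) {m m' : ℕ} (h : eF S0 t m = eF S0 t m') :
    H m = H m' := by
  have key : ∀ n : ℕ, H n = H (eF S0 t n) := by
    intro n
    unfold eF
    split
    · rfl
    · rename_i hn
      have hdm := Nat.div_add_mod (n - S0) t
      have hdiv : n = (S0 + (n - S0) % t) + ((n - S0) / t) * t := by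
        rw [Nat.mul_comm]
        omega
      conv_lhs => rw [hdiv]
      exact per_iterate hper _ _ (by omega)
  rw [key m, key m', h]

open Classical in
/-- Myhill–Nerode-lite: a language with a finite separating invariant is regular. -/
theorem isRegular_of_invariant {α : Type*} (T : Language α) (S : Type*) [Finite S]
    (ι : List α → S)
    (h : ∀ u v, ι u = ι v → ∀ w, (u ++ w ∈ T ↔ v ++ w ∈ T)) : T.IsRegular := by
  classical
  -- Myhill–Nerode right congruence
  let r : Setoid (List α) := ⟨fun u v => ∀ w, (u ++ w ∈ T ↔ v ++ w ∈ T),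
    ⟨fun _ _ => Iff.rfl, fun h1 w => (h1 w).symm, fun h1 h2 w => (h1 w).trans (h2 w)⟩⟩
  let Qt := Quotient r
  have hfac : ∀ u v : List α, ι u = ι v → (⟦u⟧ : Qt) = ⟦v⟧ := fun u v huv =>
    Quotient.sound (h u v huv)
  have hsurj : Function.Surjective (fun x : Set.range ι => (⟦Classical.choose x.2⟧ : Qt)) := by
    rintro ⟨u⟩
    refine ⟨⟨ι u, ⟨u, rfl⟩⟩, ?_⟩
    exact hfac _ _ (Classical.choose_spec (⟨u, rfl⟩ : ∃ y, ι y = ι u))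
  have : Finite Qt := Finite.of_surjective _ hsurj
  have : Fintype Qt := Fintype.ofFinite Qt
  -- DFA on the quotient
  let M : DFA α Qt :=
    { step := fun q a => Quotient.lift (fun u => (⟦u ++ [a]⟧ : Qt))
        (by
          intro u v huv
          exact Quotient.sound (fun w => by
            simpa [List.append_assoc] using huv ([a] ++ w))) q
      start := ⟦[]⟧
      accept := {q | ∃ u ∈ T, (⟦u⟧ : Qt) = q} }
  have heval : ∀ w : List α, M.eval w = ⟦w⟧ := by
    intro w
    induction w using List.reverseRecOn with
    | nil => rfl
    | append_singleton u a ih => rw [DFA.eval_append_singleton, ih]; rfl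
  have hacc : M.accepts = T := by
    ext w
    rw [DFA.mem_accepts, heval]
    constructor
    · rintro ⟨u, hu, huw⟩
      have := Quotient.exact huw []
      simpa using this.mp (by simpa using hu)
    · intro hw; exact ⟨w, hw, rfl⟩
  obtain ⟨n, ⟨g⟩⟩ := Finite.exists_equiv_fin Qt
  exact ⟨Fin n, inferInstance, DFA.reindex g M, by rw [DFA.accepts_reindex, hacc]⟩
section Periodicity

variable {A : Type*} [Fintype A] [LinearOrder A] {Q : Type*} (M : DFA A Q) (p : ℕ)

/-- Combined mod-`p` data: counts from each state, and the count of shorter accepted words. -/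
noncomputable def HZ (n : ℕ) : (Q → ZMod p) × ZMod p :=
  (fun q => (cnt M q n : ZMod p), (Alt M n : ZMod p))

/-- One-step evolution of the mod-`p` data. -/
noncomputable def PsiF : ((Q → ZMod p) × ZMod p) → ((Q → ZMod p) × ZMod p) :=
  fun v => (fun q => ∑ a : A, v.1 (M.step q a), v.2 + v.1 M.start)

theorem HZ_succ (n : ℕ) : HZ M p (n + 1) = PsiF M p (HZ M p n) := by
  unfold HZ PsiF
  refine Prod.ext ?_ ?_
  · funext q
    simp only
    rw [cnt_succ]
    push_cast
    rfl
  · simp only [Alt, Finset.sum_range_succ]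
    push_cast
    rfl

theorem HZ_iterate (n : ℕ) : HZ M p n = (PsiF M p)^[n] (HZ M p 0) := by
  induction n with
  | zero => rfl
  | succ n ih => rw [HZ_succ, ih, Function.iterate_succ_apply']

theorem HZ_eventually_periodic [Fintype Q] (hp : 0 < p) :
    ∃ s t : ℕ, 0 < t ∧ ∀ n ≥ s, HZ M p (n + t) = HZ M p n := by
  haveI : NeZero p := ⟨hp.ne'⟩
  obtain ⟨s, t, ht, hper⟩ := iter_eventually_periodic (PsiF M p) (HZ M p 0)
  refine ⟨s, t, ht, fun n hn => ?_⟩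
  rw [HZ_iterate M p (n + t), HZ_iterate M p n]
  exact hper n hn

theorem Ecnt_congr {p s t S0 : ℕ} (ht : 0 < t) (hS0 : s ≤ S0)
    (hc : ∀ n ≥ s, ∀ q : Q, ((cnt M q (n + t) : ℕ) : ZMod p) = cnt M q n)
    {j j' : ℕ} (h : eF S0 t j = eF S0 t j') (q : Q) (u : List A) :
    ((Ecnt M q u j : ℕ) : ZMod p) = ((Ecnt M q u j' : ℕ) : ZMod p) := by
  induction u generalizing q with
  | nil => rfl
  | cons a u ih =>
    show (((∑ b ∈ Finset.univ.filter (· < a), cnt M (M.step q b) (u.length + j))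
        + Ecnt M (M.step q a) u j : ℕ) : ZMod p)
      = (((∑ b ∈ Finset.univ.filter (· < a), cnt M (M.step q b) (u.length + j'))
        + Ecnt M (M.step q a) u j' : ℕ) : ZMod p)
    push_cast
    rw [ih (M.step q a)]
    congr 1
    refine Finset.sum_congr rfl fun b _ => ?_
    have hee : eF S0 t (u.length + j) = eF S0 t (u.length + j') := by
      rw [Nat.add_comm u.length j, Nat.add_comm u.length j']
      exact eF_add h u.length
    exact congr_of_eF (H := fun m => ((cnt M (M.step q b) m : ℕ) : ZMod p)) ht hS0
      (fun n hn => hc n hn (M.step q b)) hee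

end Periodicity

/-- Every recognizable (eventually periodic) set of natural numbers is
`L`-recognizable in any rational abstract numeration system. -/
theorem recognizable_set_is_L_recognizable {A : Type*} [Fintype A] [LinearOrder A]
    (L : Language A) (hreg : L.IsRegular) (hinf : (L : Set (List A)).Infinite)
    (X : Set ℕ) (N p : ℕ) (hp : 0 < p)
    (hX : ∀ m ≥ N, (m ∈ X ↔ m + p ∈ X)) :
    Language.IsRegular {w : List A | w ∈ L ∧ ansVal L w ∈ X} := by
  classical
  obtain ⟨Q, _, M, hacc⟩ := hreg
  subst hacc
  haveI : NeZero p := ⟨hp.ne'⟩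
  -- periodicity data
  obtain ⟨s, t, ht, hper⟩ := HZ_eventually_periodic M p hp
  have hc : ∀ n ≥ s, ∀ q : Q, ((cnt M q (n + t) : ℕ) : ZMod p) = cnt M q n := fun n hn q =>
    congrFun (congrArg Prod.fst (hper n hn)) q
  have ha : ∀ n ≥ s, ((Alt M (n + t) : ℕ) : ZMod p) = Alt M n := fun n hn =>
    congrArg Prod.snd (hper n hn)
  obtain ⟨n0, hn0⟩ := exists_Alt_ge M hinf N
  set S0 := max s n0 with hS0def
  have hsS0 : s ≤ S0 := le_max_left _ _
  -- congruence of X beyond N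
  have hstep : ∀ k m, N ≤ m → (m ∈ X ↔ m + k * p ∈ X) := by
    intro k
    induction k with
    | zero => simp
    | succ k ih =>
      intro m hm
      rw [ih m hm, show m + (k + 1) * p = (m + k * p) + p by ring]
      exact hX (m + k * p) (by omega)
  have hXc : ∀ m m', N ≤ m → N ≤ m' → ((m : ℕ) : ZMod p) = ((m' : ℕ) : ZMod p) →
      (m ∈ X ↔ m' ∈ X) := by
    intro m m' hm hm' hmod
    rw [ZMod.natCast_eq_natCast_iff] at hmod
    rcases le_total m m' with hle | hle
    · obtain ⟨k, hk⟩ := (Nat.modEq_iff_dvd' hle).1 hmod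
      rw [show m' = m + k * p by rw [Nat.mul_comm]; omega]
      exact hstep k m hm
    · obtain ⟨k, hk⟩ := (Nat.modEq_iff_dvd' hle).1 hmod.symm
      rw [show m = m' + k * p by rw [Nat.mul_comm]; omega]
      exact (hstep k m' hm').symm
  -- the finite invariant
  haveI : Finite {l : List A // l.length < S0} := (List.finite_length_lt A S0).to_subtype
  apply isRegular_of_invariant _
    ({l : List A // l.length < S0} ⊕ (Q × Fin (S0 + t) × (Fin (S0 + t) → ZMod p)))
    (fun u => if h : u.length < S0 then Sum.inl ⟨u, h⟩ else
      Sum.inr (M.eval u, ⟨eF S0 t u.length, eF_lt ht _⟩,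
        fun κ => ((Ecnt M M.start u κ.1 : ℕ) : ZMod p)))
  intro u v hι w
  by_cases h1 : u.length < S0 <;> by_cases h2 : v.length < S0 <;>
    simp only [h1, h2, dif_pos, dif_neg, not_false_iff, Sum.inl.injEq, Sum.inr.injEq,
      Subtype.mk.injEq, Prod.mk.injEq, Fin.mk.injEq, reduceCtorEq] at hι
  · subst hι; rfl
  · obtain ⟨hq, he, hE⟩ := hι
    have hE' : ∀ κ : Fin (S0 + t), ((Ecnt M M.start u κ.1 : ℕ) : ZMod p)
        = ((Ecnt M M.start v κ.1 : ℕ) : ZMod p) := fun κ => congrFun hE κ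
    -- membership part
    have hmemb : (u ++ w ∈ M.accepts) ↔ (v ++ w ∈ M.accepts) := by
      rw [DFA.mem_accepts, DFA.mem_accepts, DFA.eval, DFA.evalFrom_of_append,
        DFA.evalFrom_of_append, show M.evalFrom M.start u = M.evalFrom M.start v from hq]
    -- values are large
    have hlen : ∀ z : List A, ¬ z.length < S0 → N ≤ ansVal M.accepts (z ++ w) := by
      intro z hz
      rw [ansVal_eq]
      have : N ≤ Alt M (z ++ w).length := by
        apply hn0
        simp only [List.length_append]
        omega
      omega
    -- values are congruent mod p
    have hval : ((ansVal M.accepts (u ++ w) : ℕ) : ZMod p)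
        = ((ansVal M.accepts (v ++ w) : ℕ) : ZMod p) := by
      rw [ansVal_eq M (u ++ w), ansVal_eq M (v ++ w), Dcnt_eq_Ecnt, Dcnt_eq_Ecnt,
        Ecnt_append, Ecnt_append, show M.evalFrom M.start u = M.evalFrom M.start v from hq]
      push_cast
      have hAlt : ((Alt M (u ++ w).length : ℕ) : ZMod p) = ((Alt M (v ++ w).length : ℕ) : ZMod p) := by
        apply congr_of_eF (H := fun m => ((Alt M m : ℕ) : ZMod p)) ht hsS0 ha
        simp only [List.length_append]
        exact eF_add he w.length
      have hEc : ((Ecnt M M.start u (w.length + 0) : ℕ) : ZMod p)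
          = ((Ecnt M M.start v (w.length + 0) : ℕ) : ZMod p) := by
        calc ((Ecnt M M.start u (w.length + 0) : ℕ) : ZMod p)
            = ((Ecnt M M.start u (eF S0 t w.length) : ℕ) : ZMod p) := by
              apply Ecnt_congr M ht hsS0 hc
              rw [Nat.add_zero, eF_idem ht]
          _ = ((Ecnt M M.start v (eF S0 t w.length) : ℕ) : ZMod p) :=
              hE' ⟨eF S0 t w.length, eF_lt ht _⟩
          _ = ((Ecnt M M.start v (w.length + 0) : ℕ) : ZMod p) := by
              apply Ecnt_congr M ht hsS0 hc
              rw [Nat.add_zero, eF_idem ht]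
      rw [hAlt, hEc]
    show (u ++ w ∈ M.accepts ∧ ansVal M.accepts (u ++ w) ∈ X)
      ↔ (v ++ w ∈ M.accepts ∧ ansVal M.accepts (v ++ w) ∈ X)
    rw [hmemb]
    constructor
    · rintro ⟨hm, hx⟩
      exact ⟨hm, (hXc _ _ (hlen u h1) (hlen v h2) hval).1 hx⟩
    · rintro ⟨hm, hx⟩
      exact ⟨hm, (hXc _ _ (hlen u h1) (hlen v h2) hval).2 hx⟩
end
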